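/- arXiv:2208.00610 — 7 statements merged into one kernel-verified Lean document; each statement's English description precedes it below -/
import Mathlib

section
/- The distance characteristic polynomial of the complete multipartite graph $K_{n_1,\ldots,n_k}$ on $n = n_1+\cdots+n_k$ vertices equals $(\lambda+2)^{n-k}\left[\prod_{i=1}^k(\lambda-n_i+2)-\sum_{i=1}^k n_i\prod_{j\neq i}(\lambda-n_j+2)\right]$. -/
open Polynomial

open Matrix Finset

lemma det_ones_aux {K : Type*} [Field K] (m : ℕ) (hm : 1 ≤ m) (y : K) (hy : y ≠ 0) :
    (Matrix.of fun a b : Fin m => if a = b then y - 1 else (-1 : K)).det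
      = y ^ (m - 1) * (y - m) := by
  have h : (Matrix.of fun a b : Fin m => if a = b then y - 1 else (-1 : K))
      = y • (1 + Matrix.replicateCol Unit (fun _ : Fin m => -y⁻¹) *
          Matrix.replicateRow Unit (fun _ : Fin m => (1:K))) := by
    ext a b
    by_cases hab : a = b <;>
      simp [hab, Matrix.mul_apply, Matrix.one_apply, mul_add, mul_neg,
        mul_inv_cancel₀ hy, sub_eq_add_neg]
  rw [h, Matrix.det_smul, Matrix.det_one_add_replicateCol_mul_replicateRow]
  simp only [dotProduct, Finset.sum_const, Finset.card_univ, Fintype.card_fin,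
    nsmul_eq_mul, one_mul]
  obtain ⟨m, rfl⟩ := Nat.exists_eq_add_of_le hm
  rw [add_comm 1 m, pow_succ, Nat.add_sub_cancel]
  field_simp
  ring

lemma key_ident {K : Type*} [Field K] {k : ℕ} (c : Fin k → ℕ) (hc : ∀ i, 1 ≤ c i)
    (y : K) (d : Fin k → K) (hd : ∀ i, d i ≠ 0) :
    (∏ i, y ^ (c i - 1) * d i) * (1 - ∑ i, (c i : K) * (d i)⁻¹)
      = y ^ ((∑ i, c i) - k) * (∏ i, d i - ∑ i, (c i : K) * ∏ j ∈ Finset.univ.erase i, d j) := by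
  have hnk : ∑ i, (c i - 1) = (∑ i, c i) - k := by
    have h1 : ∑ i, c i = ∑ i, ((c i - 1) + 1) := by
      refine Finset.sum_congr rfl fun i _ => ?_
      have := hc i; omega
    rw [Finset.sum_add_distrib, Finset.sum_const, Finset.card_univ, Fintype.card_fin,
      smul_eq_mul, mul_one] at h1
    omega
  rw [Finset.prod_mul_distrib, Finset.prod_pow_eq_pow_sum, hnk, mul_assoc]
  congr 1
  rw [mul_sub, mul_one, Finset.mul_sum]
  congr 1
  refine Finset.sum_congr rfl fun i _ => ?_
  rw [← Finset.mul_prod_erase Finset.univ d (Finset.mem_univ i)]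
  have h := hd i
  field_simp

/-- The determinant of the (mapped) distance characteristic matrix, abstractly. -/
lemma detN {K : Type*} [Field K] {k : ℕ} (c : Fin k → ℕ) (hc : ∀ i, 1 ≤ c i)
    (x : K) (hx2 : x + 2 ≠ 0) (hdne : ∀ i, x - (c i : K) + 2 ≠ 0) :
    (Matrix.of (fun p q : (i : Fin k) × Fin (c i) =>
        if p.1 = q.1 then (if p = q then x + 1 else -1) else 0) +
      Matrix.replicateCol Unit (fun _ : (i : Fin k) × Fin (c i) => (-1 : K)) *
      Matrix.replicateRow Unit (fun _ : (i : Fin k) × Fin (c i) => (1 : K))).det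
    = (x + 2) ^ ((∑ i, c i) - k) *
        (∏ i, (x - (c i : K) + 2) -
          ∑ i, (c i : K) * ∏ j ∈ Finset.univ.erase i, (x - (c j : K) + 2)) := by
  classical
  set d : Fin k → K := fun i => x - (c i : K) + 2 with hdd
  have hdval : ∀ i, d i = x + 2 - (c i : K) := fun i => by rw [hdd]; ring
  set N : Matrix ((i : Fin k) × Fin (c i)) ((i : Fin k) × Fin (c i)) K :=
    Matrix.of (fun p q => if p.1 = q.1 then (if p = q then x + 1 else -1) else 0) with hN
  have hNbt : N.BlockTriangular Sigma.fst := by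
    intro p q hlt
    simp only [hN, Matrix.of_apply]
    rw [if_neg fun h => lt_irrefl _ (h ▸ hlt)]
  have himg : Finset.univ.image (Sigma.fst : ((i : Fin k) × Fin (c i)) → Fin k)
      = Finset.univ := by
    refine Finset.eq_univ_of_forall fun a => ?_
    exact Finset.mem_image.2 ⟨⟨a, ⟨0, hc a⟩⟩, Finset.mem_univ _, rfl⟩
  have hNdet : N.det = ∏ i, (x + 2) ^ (c i - 1) * d i := by
    rw [hNbt.det, himg]
    refine Finset.prod_congr rfl fun a _ => ?_
    let e : Fin (c a) ≃ {p : (i : Fin k) × Fin (c i) // p.1 = a} :=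
      { toFun := fun b => ⟨⟨a, b⟩, rfl⟩
        invFun := fun p => Fin.cast (congrArg c p.2) p.1.2
        left_inv := fun b => rfl
        right_inv := fun p => by
          rcases p with ⟨⟨i, b⟩, hp⟩
          subst hp
          rfl }
    rw [← Matrix.det_submatrix_equiv_self e]
    have hsub : ((N.toSquareBlock Sigma.fst a).submatrix e e)
        = Matrix.of fun p q : Fin (c a) => if p = q then (x + 2) - 1 else -1 := by
      ext p q
      show (if (a : Fin k) = a then
          (if (⟨a, p⟩ : (i : Fin k) × Fin (c i)) = ⟨a, q⟩ then x + 1 else -1)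
        else 0) = _
      rw [if_pos rfl]
      simp only [Matrix.of_apply]
      by_cases hpq : p = q
      · subst hpq; rw [if_pos rfl, if_pos rfl]; ring
      · rw [if_neg, if_neg hpq]
        simp [Sigma.mk.inj_iff, hpq]
    rw [hsub, det_ones_aux (c a) (hc a) (x + 2) hx2, hdval a]
  have hNunit : IsUnit N.det := by
    rw [hNdet, isUnit_iff_ne_zero]
    exact Finset.prod_ne_zero_iff.mpr fun i _ =>
      mul_ne_zero (pow_ne_zero _ hx2) (hdne i)
  set w : ((i : Fin k) × Fin (c i)) → K := fun p => (d p.1)⁻¹ with hw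
  have hNw : N *ᵥ w = fun _ => (1 : K) := by
    funext p
    rcases p with ⟨i, a⟩
    show ∑ q, N ⟨i, a⟩ q * w q = 1
    rw [← Finset.univ_sigma_univ, Finset.sum_sigma]
    rw [Finset.sum_eq_single i (fun j _ hji => Finset.sum_eq_zero fun b _ => by
      have h0 : N ⟨i, a⟩ ⟨j, b⟩ = 0 := if_neg (by simpa using hji.symm)
      rw [h0, zero_mul]) (fun h => absurd (Finset.mem_univ i) h)]
    have hterm : ∀ b : Fin (c i), N ⟨i, a⟩ ⟨i, b⟩ * w ⟨i, b⟩
        = ((if a = b then x + 2 else 0) - 1) * (d i)⁻¹ := by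
      intro b
      have hee : N ⟨i, a⟩ ⟨i, b⟩ = (if a = b then x + 2 else 0) - 1 := by
        show (if (i : Fin k) = i then
          (if (⟨i, a⟩ : (i : Fin k) × Fin (c i)) = ⟨i, b⟩ then x + 1 else -1) else 0) = _
        rw [if_pos rfl]
        by_cases hab : a = b
        · subst hab; rw [if_pos rfl, if_pos rfl]; ring
        · rw [if_neg, if_neg hab]
          · ring
          · simp [Sigma.mk.inj_iff, hab]
      rw [hee]
    rw [Finset.sum_congr rfl fun b _ => hterm b, ← Finset.sum_mul,
      Finset.sum_sub_distrib, Finset.sum_ite_eq Finset.univ a fun _ => x + 2]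
    simp only [Finset.mem_univ, if_pos, Finset.sum_const, Finset.card_univ, Fintype.card_fin,
      nsmul_eq_mul, mul_one]
    rw [← hdval i]
    exact mul_inv_cancel₀ (hdne i)
  have hNinv : N⁻¹ *ᵥ (fun _ => (1 : K)) = w := by
    calc N⁻¹ *ᵥ (fun _ => (1 : K)) = N⁻¹ *ᵥ (N *ᵥ w) := by rw [hNw]
      _ = (N⁻¹ * N) *ᵥ w := by rw [Matrix.mulVec_mulVec]
      _ = w := by rw [Matrix.nonsing_inv_mul _ hNunit, Matrix.one_mulVec]
  have hrowsum : ∀ p, ∑ q, N⁻¹ p q = w p := by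
    intro p
    have := congrFun hNinv p
    simpa [Matrix.mulVec, dotProduct] using this
  have hsumw : ∑ p, w p = ∑ i, (c i : K) * (d i)⁻¹ := by
    rw [← Finset.univ_sigma_univ, Finset.sum_sigma]
    simp [hw, Finset.sum_const, Finset.card_univ, nsmul_eq_mul, mul_comm]
  have h2f : (1 + Matrix.replicateRow Unit (fun _ : (i : Fin k) × Fin (c i) => (1 : K)) * N⁻¹ *
      Matrix.replicateCol Unit (fun _ : (i : Fin k) × Fin (c i) => (-1 : K))).det
      = 1 - ∑ i, (c i : K) * (d i)⁻¹ := by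
    rw [Matrix.det_unique, Matrix.add_apply, Matrix.one_apply_eq]
    have hval : (Matrix.replicateRow Unit (fun _ : (i : Fin k) × Fin (c i) => (1 : K)) * N⁻¹ *
        Matrix.replicateCol Unit (fun _ : (i : Fin k) × Fin (c i) => (-1 : K))) default default
        = - ∑ q, ∑ p, N⁻¹ p q := by
      simp [Matrix.mul_apply, Finset.sum_mul]
    rw [hval, Finset.sum_comm]
    rw [Finset.sum_congr rfl fun p _ => hrowsum p, hsumw]
    ring
  rw [Matrix.det_add_replicateCol_mul_replicateRow hNunit, hNdet, h2f, key_ident c hc (x + 2) d hdne]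


lemma dist_cmp {k : ℕ} (hk : 2 ≤ k) (c : Fin k → ℕ) (hc : ∀ i, 1 ≤ c i)
    (u v : (i : Fin k) × Fin (c i)) :
    (SimpleGraph.completeMultipartiteGraph fun i : Fin k => Fin (c i)).dist u v
      = if u = v then 0 else if u.1 = v.1 then 2 else 1 := by
  set G := SimpleGraph.completeMultipartiteGraph fun i : Fin k => Fin (c i) with hG
  have hadj : ∀ p q : (i : Fin k) × Fin (c i), G.Adj p q ↔ p.1 ≠ q.1 := by
    intro p q; simp [hG]
  by_cases h1 : u = v
  · simp [h1]
  rw [if_neg h1]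
  by_cases h2 : u.1 = v.1
  · rw [if_pos h2]
    have : Nontrivial (Fin k) := Fin.nontrivial_iff_two_le.mpr hk
    obtain ⟨j, hj⟩ := exists_ne u.1
    have hw : G.Adj u ⟨j, ⟨0, hc j⟩⟩ := (hadj _ _).2 (by simpa using hj.symm)
    have hw' : G.Adj (⟨j, ⟨0, hc j⟩⟩ : (i : Fin k) × Fin (c i)) v :=
      (hadj _ _).2 (by simpa [← h2] using hj)
    have hle : G.dist u v ≤ 2 :=
      le_trans (SimpleGraph.dist_le ((hw.toWalk.append hw'.toWalk))) (by simp)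
    have hne0 : G.dist u v ≠ 0 :=
      SimpleGraph.dist_ne_zero_iff_ne_and_reachable.mpr ⟨h1, ⟨hw.toWalk.append hw'.toWalk⟩⟩
    have hne1 : G.dist u v ≠ 1 := fun h =>
      (by simpa [hadj] using SimpleGraph.dist_eq_one_iff_adj.mp h : u.1 ≠ v.1) h2
    omega
  · rw [if_neg h2]
    exact SimpleGraph.dist_eq_one_iff_adj.mpr ((hadj _ _).2 h2)

/-- The distance matrix of a graph, with real entries. -/
noncomputable def distMatrix {V : Type*} [Fintype V] (G : SimpleGraph V) : Matrix V V ℝ :=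
  Matrix.of fun u v => (G.dist u v : ℝ)

/-- The distance characteristic polynomial of the complete multipartite graph
`K_{n_1,…,n_k}` equals
`(λ+2)^(n-k) * (∏ i (λ - n_i + 2) - ∑ i n_i ∏_{j≠i} (λ - n_j + 2))`. -/
theorem distance_charpoly_completeMultipartite (k : ℕ) (hk : 2 ≤ k)
    (c : Fin k → ℕ) (hc : ∀ i, 1 ≤ c i) :
    (distMatrix (SimpleGraph.completeMultipartiteGraph fun i : Fin k => Fin (c i))).charpoly =
      (X + 2) ^ ((∑ i, c i) - k) *
        (∏ i, (X - C (c i : ℝ) + 2) -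
          ∑ i, C (c i : ℝ) * ∏ j ∈ Finset.univ.erase i, (X - C (c j : ℝ) + 2)) := by
  classical
  set G := SimpleGraph.completeMultipartiteGraph fun i : Fin k => Fin (c i) with hG
  let K := FractionRing ℝ[X]
  let φ : ℝ[X] →+* K := algebraMap ℝ[X] K
  have hinj : Function.Injective φ := IsFractionRing.injective ℝ[X] K
  apply hinj
  set x : K := φ X with hx
  have hx2 : x + 2 ≠ 0 := by
    have hne : (X + 2 : ℝ[X]) ≠ 0 := fun h => by simpa using congrArg (eval 0) h
    have h2 : φ (X + 2) ≠ 0 := fun h => hne (by apply hinj; simpa using h)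
    simpa [map_add, map_ofNat] using h2
  have hdne : ∀ i, x - (c i : K) + 2 ≠ 0 := by
    intro i
    have hne : (X - ((c i : ℕ) : ℝ[X]) + 2) ≠ 0 := fun h => by
      have h2 := congrArg (eval ((c i : ℝ) - 1)) h
      norm_num at h2
    have h2 : φ (X - ((c i : ℕ) : ℝ[X]) + 2) ≠ 0 := fun h => hne (by apply hinj; simpa using h)
    simpa [map_sub, map_add, map_ofNat, map_natCast] using h2
  have hmat : (charmatrix (distMatrix G)).map φ
      = Matrix.of (fun p q : (i : Fin k) × Fin (c i) =>
          if p.1 = q.1 then (if p = q then x + 1 else -1) else 0) +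
        Matrix.replicateCol Unit (fun _ : (i : Fin k) × Fin (c i) => (-1 : K)) *
          Matrix.replicateRow Unit (fun _ : (i : Fin k) × Fin (c i) => (1 : K)) := by
    ext p q
    have hcr : (Matrix.replicateCol Unit (fun _ : (i : Fin k) × Fin (c i) => (-1 : K)) *
        Matrix.replicateRow Unit (fun _ : (i : Fin k) × Fin (c i) => (1 : K))) p q = -1 := by
      simp [Matrix.mul_apply]
    rw [Matrix.map_apply, Matrix.add_apply, hcr]
    by_cases hpq : p = q
    · subst hpq
      rw [charmatrix_apply_eq]
      have hD : distMatrix G p p = 0 := by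
        simp [distMatrix, dist_cmp hk c hc]
      rw [hD]
      simp [← hx]
      ring
    · rw [charmatrix_apply_ne _ _ _ hpq]
      have hD : distMatrix G p q = if p.1 = q.1 then 2 else 1 := by
        simp only [distMatrix, Matrix.of_apply, hG, dist_cmp hk c hc, if_neg hpq]
        split <;> norm_num
      rw [hD]
      by_cases h2 : p.1 = q.1
      · rw [if_pos h2]
        simp only [Matrix.of_apply, if_pos h2, if_neg hpq]
        rw [_root_.map_neg, map_ofNat (C : ℝ →+* ℝ[X]) 2, map_ofNat φ 2]
        ring
      · rw [if_neg h2]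
        simp only [Matrix.of_apply, if_neg h2]
        rw [_root_.map_neg, _root_.map_one, _root_.map_one]
        ring
  have hLHS : φ ((distMatrix G).charpoly)
      = (x + 2) ^ ((∑ i, c i) - k) *
        (∏ i, (x - (c i : K) + 2) -
          ∑ i, (c i : K) * ∏ j ∈ Finset.univ.erase i, (x - (c j : K) + 2)) := by
    rw [Matrix.charpoly, RingHom.map_det, RingHom.mapMatrix_apply, hmat, detN c hc x hx2 hdne]
  rw [hLHS]
  simp only [_root_.map_mul, map_pow, _root_.map_add, map_sub, map_prod, map_sum, map_natCast, map_ofNat,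
    ← hx, Polynomial.C_eq_natCast]
end

section
/- Let $G$ be a finite non-abelian group that is a CA-group (every centralizer of a non-central element is abelian), and let $X_1,\ldots,X_n$ be the distinct centralizers of non-central elements of $G$. Then the non-commuting graph $\Gamma_G$ is the complete multipartite graph $K_{m_1,\ldots,m_n}$ where $m_i = |X_i| - |Z(G)|$. -/
/-- The non-commuting graph of a group: vertices are the non-central elements,
two vertices adjacent iff they do not commute. -/
def noncommGraph (G : Type*) [Group G] :
    SimpleGraph {g : G // g ∉ Subgroup.center G} where
  Adj u v := u.1 * v.1 ≠ v.1 * u.1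
  symm := ⟨fun _ _ h e => h e.symm⟩
  loopless := ⟨fun _ h => h rfl⟩

/-- If `G` is a finite non-abelian CA-group and `X 0, …, X (n-1)` are the distinct
centralizers of non-central elements of `G`, then the non-commuting graph of `G` is the
complete multipartite graph `K_{m_1,…,m_n}` with `m_i = |X i| - |Z(G)|`. -/
theorem noncommGraph_CA_completeMultipartite (G : Type*) [Group G] [Fintype G]
    (hnab : ¬ ∀ a b : G, a * b = b * a)
    (hCA : ∀ x : G, x ∉ Subgroup.center G → IsMulCommutative (Subgroup.centralizer {x}))
    (n : ℕ) (X : Fin n → Subgroup G) (hinj : Function.Injective X)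
    (hrange : Set.range X =
      {H : Subgroup G | ∃ x : G, x ∉ Subgroup.center G ∧ H = Subgroup.centralizer {x}}) :
    Nonempty (noncommGraph G ≃g SimpleGraph.completeMultipartiteGraph
      fun i : Fin n => Fin (Nat.card (X i) - Nat.card (Subgroup.center G))) := by
  classical
  set Z := Subgroup.center G with hZ
  -- key: for noncentral g h, commuting ↔ same centralizer
  have key : ∀ g h : G, g ∉ Z → h ∉ Z → (g * h = h * g ↔
      Subgroup.centralizer {g} = Subgroup.centralizer {h}) := by
    intro g h hg hh
    constructor
    · intro hc
      have hgh : h ∈ Subgroup.centralizer {g} := Subgroup.mem_centralizer_singleton_iff.2 hc.symm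
      have hhg : g ∈ Subgroup.centralizer {h} := Subgroup.mem_centralizer_singleton_iff.2 hc
      haveI := hCA g hg
      haveI := hCA h hh
      apply le_antisymm
      · intro y hy
        exact Subgroup.mem_centralizer_singleton_iff.2
          (Subgroup.mul_comm_of_mem_isMulCommutative _ hy hgh)
      · intro y hy
        exact Subgroup.mem_centralizer_singleton_iff.2
          (Subgroup.mul_comm_of_mem_isMulCommutative _ hy hhg)
    · intro hcc
      have : g ∈ Subgroup.centralizer {h} := by
        rw [← hcc]; exact Subgroup.mem_centralizer_singleton_iff.2 rfl
      exact Subgroup.mem_centralizer_singleton_iff.1 this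
  -- every X i is a centralizer of a noncentral element
  have hXi : ∀ i, ∃ x : G, x ∉ Z ∧ X i = Subgroup.centralizer {x} := by
    intro i
    have : X i ∈ Set.range X := ⟨i, rfl⟩
    rwa [hrange] at this
  -- lemma B: noncentral g in X i has centralizer X i
  have lemB : ∀ i, ∀ g : G, g ∉ Z → g ∈ X i → Subgroup.centralizer {g} = X i := by
    intro i g hg hgX
    obtain ⟨x, hx, hXx⟩ := hXi i
    rw [hXx] at hgX
    have hc : g * x = x * g := Subgroup.mem_centralizer_singleton_iff.1 hgX
    rw [(key g x hg hx).1 hc, hXx]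
  -- index function
  have hidx : ∀ v : {g : G // g ∉ Subgroup.center G}, ∃ i,
      X i = Subgroup.centralizer {v.1} := by
    intro v
    have : Subgroup.centralizer {v.1} ∈ Set.range X := by
      rw [hrange]; exact ⟨v.1, v.2, rfl⟩
    obtain ⟨i, hi⟩ := this
    exact ⟨i, hi⟩
  choose idx hidxspec using hidx
  -- adjacency characterization
  have hadj : ∀ u v : {g : G // g ∉ Subgroup.center G},
      (u.1 * v.1 = v.1 * u.1 ↔ idx u = idx v) := by
    intro u v
    rw [key u.1 v.1 u.2 v.2, ← hidxspec u, ← hidxspec v]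
    exact ⟨fun h => hinj h, fun h => h ▸ rfl⟩
  -- cardinality of each fiber
  have hcard : ∀ i : Fin n, Nat.card {v : {g : G // g ∉ Subgroup.center G} // idx v = i}
      = Nat.card (X i) - Nat.card Z := by
    intro i
    have e : {v : {g : G // g ∉ Subgroup.center G} // idx v = i} ≃
        ((X i : Set G) \ (Z : Set G) : Set G) := by
      refine ⟨fun v => ⟨v.1.1, ?_, v.1.2⟩, fun g => ⟨⟨g.1, g.2.2⟩, ?_⟩, ?_, ?_⟩
      · have : v.1.1 ∈ Subgroup.centralizer {v.1.1} :=
          Subgroup.mem_centralizer_singleton_iff.2 rfl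
        rw [← hidxspec v.1, v.2] at this
        exact this
      · apply hinj
        rw [hidxspec ⟨g.1, g.2.2⟩]
        exact lemB i g.1 g.2.2 g.2.1
      · intro v; rfl
      · intro g; rfl
    have hsub : (Z : Set G) ⊆ (X i : Set G) := by
      obtain ⟨x, hx, hXx⟩ := hXi i
      rw [hXx]
      exact Subgroup.center_le_centralizer {x}
    have h1 : Nat.card ((X i : Set G) \ (Z : Set G) : Set G)
        = ((X i : Set G) \ (Z : Set G)).ncard := Nat.card_coe_set_eq _
    have h2 : Nat.card (X i) = (X i : Set G).ncard := Nat.card_coe_set_eq _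
    have h3 : Nat.card Z = (Z : Set G).ncard := Nat.card_coe_set_eq _
    rw [Nat.card_congr e, h1, h2, h3, Set.ncard_diff hsub]
  -- build the equiv
  let e2 : ∀ i : Fin n, {v : {g : G // g ∉ Subgroup.center G} // idx v = i} ≃
      Fin (Nat.card (X i) - Nat.card Z) := fun i =>
    Fintype.equivFinOfCardEq (by rw [← Nat.card_eq_fintype_card]; exact hcard i)
  let e : {g : G // g ∉ Subgroup.center G} ≃
      Σ i : Fin n, Fin (Nat.card (X i) - Nat.card Z) :=
    (Equiv.sigmaFiberEquiv idx).symm.trans (Equiv.sigmaCongrRight e2)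
  refine ⟨⟨e, ?_⟩⟩
  intro u v
  show (e u).1 ≠ (e v).1 ↔ _
  have h1 : (e u).1 = idx u := rfl
  have h2 : (e v).1 = idx v := rfl
  rw [h1, h2]
  exact not_congr (hadj u v).symm
end

section
/- For $n \geq 2$, the non-commuting graph of the generalized quaternion group $Q_{4n}$ is the complete $(n+1)$-partite graph $K_{2n-2,2,2,\ldots,2}$ (with $n$ parts of size $2$). -/
namespace QuaternionAux

open QuaternionGroup

variable {n : ℕ}

lemma two_mul_eq_zero (hn : 2 ≤ n) (i : ZMod (2 * n)) :
    i + i = 0 ↔ i = 0 ∨ i = (n : ZMod (2 * n)) := by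
  haveI : NeZero (2 * n) := ⟨by omega⟩
  constructor
  · intro h
    have h1 : ((i.val + i.val : ℕ) : ZMod (2 * n)) = 0 := by
      push_cast [ZMod.natCast_zmod_val]
      exact h
    rw [ZMod.natCast_eq_zero_iff] at h1
    obtain ⟨k, hk⟩ := h1
    have hv : i.val < 2 * n := ZMod.val_lt i
    have hk2 : i.val = 0 ∨ i.val = n := by
      have hkle : k ≤ 1 := by
        by_contra hgt
        push_neg at hgt
        have h4 := Nat.mul_le_mul_left (2 * n) hgt
        omega
      interval_cases k <;> omega
    rcases hk2 with h2 | h2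
    · exact Or.inl ((ZMod.val_eq_zero i).mp h2)
    · refine Or.inr (ZMod.val_injective _ ?_)
      rw [h2, ZMod.val_cast_of_lt (by omega)]
  · rintro (rfl | rfl)
    · simp
    · rw [← Nat.cast_add, (by ring : n + n = 2 * n), ZMod.natCast_self]

lemma a_mem_center (hn : 2 ≤ n) (i : ZMod (2 * n)) :
    QuaternionGroup.a i ∈ Subgroup.center (QuaternionGroup n) ↔
      i = 0 ∨ i = (n : ZMod (2 * n)) := by
  rw [Subgroup.mem_center_iff]
  constructor
  · intro h
    have h0 := h (QuaternionGroup.xa 0)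
    rw [xa_mul_a, a_mul_xa, QuaternionGroup.xa.injEq, zero_add, zero_sub] at h0
    rw [← two_mul_eq_zero hn]
    exact add_eq_zero_iff_eq_neg.mpr h0
  · intro h g
    have hi : i + i = 0 := (two_mul_eq_zero hn i).mpr h
    have hi' : i = -i := eq_neg_of_add_eq_zero_left hi
    cases g with
    | a j => rw [a_mul_a, a_mul_a, add_comm]
    | xa j =>
        rw [xa_mul_a, a_mul_xa, QuaternionGroup.xa.injEq, sub_eq_add_neg, ← hi']

lemma xa_not_mem_center (hn : 2 ≤ n) (j : ZMod (2 * n)) :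
    QuaternionGroup.xa j ∉ Subgroup.center (QuaternionGroup n) := by
  haveI : NeZero (2 * n) := ⟨by omega⟩
  rw [Subgroup.mem_center_iff]
  intro h
  have h1 := h (QuaternionGroup.a 1)
  rw [a_mul_xa, xa_mul_a, QuaternionGroup.xa.injEq] at h1
  have h2 : (1 : ZMod (2 * n)) + 1 = 0 := by linear_combination -h1
  have h3 := (two_mul_eq_zero hn 1).mp h2
  have hv1 : (1 : ZMod (2 * n)).val = 1 := by
    rw [← Nat.cast_one, ZMod.val_cast_of_lt (by omega)]
  rcases h3 with h3 | h3
  · rw [h3, ZMod.val_zero] at hv1; omega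
  · rw [h3, ZMod.val_cast_of_lt (by omega)] at hv1; omega

/-- the partition map -/
def phi (hn : 2 ≤ n) : QuaternionGroup n → Fin (n + 1)
  | .a _ => 0
  | .xa j => ⟨j.val % n + 1, Nat.succ_lt_succ (Nat.mod_lt _ (by omega))⟩

lemma val_mod_eq_iff (hn : 2 ≤ n) (i j : ZMod (2 * n)) :
    j.val % n = i.val % n ↔ j = i ∨ j = i + (n : ZMod (2 * n)) := by
  haveI : NeZero (2 * n) := ⟨by omega⟩
  have hi := ZMod.val_lt i
  have hj := ZMod.val_lt j
  have hnv : ((n : ℕ) : ZMod (2 * n)).val = n := ZMod.val_cast_of_lt (by omega)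
  constructor
  · intro h
    have hdi := Nat.div_add_mod i.val n
    have hdj := Nat.div_add_mod j.val n
    have hqi : i.val / n < 2 := Nat.div_lt_of_lt_mul (by omega)
    have hqj : j.val / n < 2 := Nat.div_lt_of_lt_mul (by omega)
    have hri : i.val % n < n := Nat.mod_lt _ (by omega)
    have hcase : j.val = i.val ∨ j.val = i.val + n ∨ i.val = j.val + n := by
      interval_cases hi' : i.val / n <;> interval_cases hj' : j.val / n <;> omega
    rcases hcase with hc | hc | hc
    · exact Or.inl (ZMod.val_injective _ hc)
    · refine Or.inr (ZMod.val_injective _ ?_)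
      rw [ZMod.val_add, hnv, Nat.mod_eq_of_lt (by omega), hc]
    · refine Or.inr ?_
      have heq : (i + (n : ZMod (2 * n))).val = j.val := by
        rw [ZMod.val_add, hnv, (by omega : i.val + n = j.val + 2 * n),
          Nat.add_mod_right, Nat.mod_eq_of_lt (by omega)]
      exact (ZMod.val_injective _ heq).symm
  · rintro (rfl | rfl)
    · rfl
    · rw [ZMod.val_add, hnv]
      rcases lt_or_ge (i.val + n) (2 * n) with hlt | hge
      · rw [Nat.mod_eq_of_lt hlt, Nat.add_mod_right]
      · rw [(by omega : i.val + n = (i.val - n) + 2 * n), Nat.add_mod_right,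
          Nat.mod_eq_of_lt (show i.val - n < 2 * n by omega)]
        conv_rhs => rw [(by omega : i.val = (i.val - n) + n), Nat.add_mod_right]

lemma adj_iff (hn : 2 ≤ n)
    (u v : {g : QuaternionGroup n // g ∉ Subgroup.center (QuaternionGroup n)}) :
    (noncommGraph (QuaternionGroup n)).Adj u v ↔ phi hn u.1 ≠ phi hn v.1 := by
  haveI : NeZero (2 * n) := ⟨by omega⟩
  obtain ⟨gu, hu⟩ := u
  obtain ⟨gv, hv⟩ := v
  change gu * gv ≠ gv * gu ↔ _
  cases gu with
  | a i =>
    have hi : i ≠ 0 ∧ i ≠ (n : ZMod (2 * n)) := by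
      rw [a_mem_center hn, not_or] at hu; exact hu
    have hii : i + i ≠ 0 := fun h => by
      rcases (two_mul_eq_zero hn i).mp h with h | h
      exacts [hi.1 h, hi.2 h]
    cases gv with
    | a j =>
        refine iff_of_false (fun h => h ?_) (fun h => h rfl)
        rw [a_mul_a, a_mul_a, add_comm]
    | xa j =>
        refine iff_of_true ?_ ?_
        · rw [a_mul_xa, xa_mul_a]
          intro h
          rw [QuaternionGroup.xa.injEq] at h
          exact hii (by linear_combination -h)
        · intro h
          have h5 : (0 : Fin (n + 1)).val = j.val % n + 1 := congrArg Fin.val h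
          rw [Fin.val_zero] at h5
          omega
  | xa i =>
    cases gv with
    | a j =>
        have hj : j ≠ 0 ∧ j ≠ (n : ZMod (2 * n)) := by
          rw [a_mem_center hn, not_or] at hv; exact hv
        have hjj : j + j ≠ 0 := fun h => by
          rcases (two_mul_eq_zero hn j).mp h with h | h
          exacts [hj.1 h, hj.2 h]
        refine iff_of_true ?_ ?_
        · rw [xa_mul_a, a_mul_xa]
          intro h
          rw [QuaternionGroup.xa.injEq] at h
          exact hjj (by linear_combination h)
        · intro h
          have h5 : i.val % n + 1 = (0 : Fin (n + 1)).val := congrArg Fin.val h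
          rw [Fin.val_zero] at h5
          omega
    | xa j =>
        have key : (n : ZMod (2 * n)) + j - i = (n : ZMod (2 * n)) + i - j ↔
            (j = i ∨ j = i + (n : ZMod (2 * n))) := by
          constructor
          · intro h
            have h2 : (j - i) + (j - i) = 0 := by linear_combination h
            rcases (two_mul_eq_zero hn _).mp h2 with h3 | h3
            · exact Or.inl (sub_eq_zero.mp h3)
            · exact Or.inr (by linear_combination h3)
          · rintro (rfl | rfl)
            · rfl
            · have hnn : (n : ZMod (2 * n)) + n = 0 :=
                (two_mul_eq_zero hn _).mpr (Or.inr rfl)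
              linear_combination hnn
        rw [xa_mul_xa, xa_mul_xa, ne_eq, QuaternionGroup.a.injEq, key,
          ← val_mod_eq_iff hn i j]
        show ¬_ ↔ ¬ (⟨i.val % n + 1, _⟩ : Fin (n + 1)) = ⟨j.val % n + 1, _⟩
        rw [Fin.mk.injEq, Nat.add_right_cancel_iff]
        exact not_congr eq_comm

end QuaternionAux

open QuaternionAux QuaternionGroup in
/-- For `n ≥ 2`, the non-commuting graph of the generalized quaternion group `Q_{4n}`
is the complete `(n+1)`-partite graph `K_{2n-2,2,2,…,2}` with `n` parts of size `2`. -/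
theorem noncommGraph_quaternionGroup (n : ℕ) (hn : 2 ≤ n) :
    Nonempty (noncommGraph (QuaternionGroup n) ≃g
      SimpleGraph.completeMultipartiteGraph
        fun i : Fin (n + 1) => Fin (if i = 0 then 2 * n - 2 else 2)) := by
  haveI : NeZero (2 * n) := ⟨by omega⟩
  classical
  set V := {g : QuaternionGroup n // g ∉ Subgroup.center (QuaternionGroup n)} with hV
  set φ : V → Fin (n + 1) := fun v => phi hn v.1 with hφ
  -- iso onto fibers of φ
  have iso1 : noncommGraph (QuaternionGroup n) ≃g
      SimpleGraph.completeMultipartiteGraph (fun i : Fin (n + 1) => {v : V // φ v = i}) :=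
    ⟨(Equiv.sigmaFiberEquiv φ).symm, by
      intro u v
      rw [SimpleGraph.comap_adj, SimpleGraph.top_adj]
      exact (adj_iff hn u v).symm⟩
  -- fiberwise equivalences
  have hfib : ∀ i : Fin (n + 1),
      Nonempty ({v : V // φ v = i} ≃ Fin (if i = 0 then 2 * n - 2 else 2)) := by
    rintro ⟨iv, hiv⟩
    rcases iv with _ | k
    · -- part 0
      have h0 : (⟨0, hiv⟩ : Fin (n + 1)) = 0 := Fin.ext (by simp)
      rw [h0, if_pos rfl]
      have e1 : {i : ZMod (2 * n) // i ≠ 0 ∧ i ≠ (n : ZMod (2 * n))} ≃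
          {v : V // φ v = 0} := by
        refine Equiv.ofBijective
          (fun i => ⟨⟨.a i.1, by rw [a_mem_center hn, not_or]; exact i.2⟩, rfl⟩) ⟨?_, ?_⟩
        · intro i1 i2 h
          have h' : QuaternionGroup.a i1.1 = QuaternionGroup.a i2.1 :=
            congrArg Subtype.val (congrArg Subtype.val h)
          exact Subtype.ext (by simpa using h')
        · rintro ⟨⟨g, hc⟩, hp⟩
          cases g with
          | a i =>
              exact ⟨⟨i, by rwa [a_mem_center hn, not_or] at hc⟩, rfl⟩
          | xa j =>
              exfalso
              have h5 : j.val % n + 1 = (0 : Fin (n + 1)).val := congrArg Fin.val hp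
              rw [Fin.val_zero] at h5
              omega
      have h0n : (0 : ZMod (2 * n)) ≠ (n : ZMod (2 * n)) := by
        intro h
        have h5 := congrArg ZMod.val h
        rw [ZMod.val_zero, ZMod.val_cast_of_lt (by omega)] at h5
        omega
      have hone : Fintype.card {i : ZMod (2 * n) // i = 0 ∨ i = (n : ZMod (2 * n))} = 2 := by
        rw [Fintype.card_subtype, Finset.filter_or, Finset.filter_eq', Finset.filter_eq',
          if_pos (Finset.mem_univ _), if_pos (Finset.mem_univ _),
          Finset.card_union_of_disjoint (Finset.disjoint_singleton.mpr h0n)]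
        simp
      have hcard : Fintype.card {i : ZMod (2 * n) // i ≠ 0 ∧ i ≠ (n : ZMod (2 * n))} =
          2 * n - 2 := by
        have e2 : {i : ZMod (2 * n) // i ≠ 0 ∧ i ≠ (n : ZMod (2 * n))} ≃
            {i : ZMod (2 * n) // ¬(i = 0 ∨ i = (n : ZMod (2 * n)))} :=
          Equiv.subtypeEquivRight (fun i => (not_or).symm)
        rw [Fintype.card_congr e2, Fintype.card_subtype_compl, ZMod.card, hone]
      exact ⟨e1.symm.trans (Fintype.equivFinOfCardEq hcard)⟩
    · -- part k+1
      have hk : k < n := by omega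
      rw [if_neg (by simp [Fin.ext_iff])]
      have hp1 : φ ⟨.xa ((k : ℕ) : ZMod (2 * n)), xa_not_mem_center hn _⟩ =
          ⟨k + 1, hiv⟩ := by
        apply Fin.ext
        show ((k : ℕ) : ZMod (2 * n)).val % n + 1 = k + 1
        rw [ZMod.val_cast_of_lt (by omega), Nat.mod_eq_of_lt hk]
      have hp2 : φ ⟨.xa ((k + n : ℕ) : ZMod (2 * n)), xa_not_mem_center hn _⟩ =
          ⟨k + 1, hiv⟩ := by
        apply Fin.ext
        show ((k + n : ℕ) : ZMod (2 * n)).val % n + 1 = k + 1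
        rw [ZMod.val_cast_of_lt (by omega), Nat.add_mod_right, Nat.mod_eq_of_lt hk]
      have hne : ((k : ℕ) : ZMod (2 * n)) ≠ ((k + n : ℕ) : ZMod (2 * n)) := by
        intro heq
        have h5 := congrArg ZMod.val heq
        rw [ZMod.val_cast_of_lt (by omega), ZMod.val_cast_of_lt (by omega)] at h5
        omega
      have e1 : Fin 2 ≃ {v : V // φ v = ⟨k + 1, hiv⟩} := by
        refine Equiv.ofBijective
          (![⟨⟨.xa ((k : ℕ) : ZMod (2 * n)), xa_not_mem_center hn _⟩, hp1⟩,
             ⟨⟨.xa ((k + n : ℕ) : ZMod (2 * n)), xa_not_mem_center hn _⟩, hp2⟩]) ⟨?_, ?_⟩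
        · intro m1 m2 h
          have h' := congrArg (fun x => x.1.1) h
          fin_cases m1 <;> fin_cases m2 <;>
            simp only [Matrix.cons_val_zero, Matrix.cons_val_one, Matrix.head_cons] at h' <;>
            first
              | rfl
              | exact absurd (QuaternionGroup.xa.inj h') hne
              | exact absurd (QuaternionGroup.xa.inj h') hne.symm
        · rintro ⟨⟨g, hc⟩, hp⟩
          cases g with
          | a i =>
              exfalso
              have h5 : (0 : Fin (n + 1)).val = k + 1 := congrArg Fin.val hp
              rw [Fin.val_zero] at h5
              omega
          | xa j =>
              have h5 : j.val % n + 1 = k + 1 := congrArg Fin.val hp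
              have hjm : j.val % n = k := by omega
              have hjlt := ZMod.val_lt j
              have hq : j.val / n < 2 := Nat.div_lt_of_lt_mul (by omega)
              have hd := Nat.div_add_mod j.val n
              have hcase : j.val = k ∨ j.val = k + n := by
                interval_cases hq' : j.val / n <;> omega
              rcases hcase with hc' | hc'
              · refine ⟨0, ?_⟩
                have hj' : ((k : ℕ) : ZMod (2 * n)) = j :=
                  ZMod.val_injective _ (by rw [ZMod.val_cast_of_lt (by omega), hc'])
                subst hj'
                simp only [Matrix.cons_val_zero]
              · refine ⟨1, ?_⟩
                have hj' : ((k + n : ℕ) : ZMod (2 * n)) = j :=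
                  ZMod.val_injective _ (by rw [ZMod.val_cast_of_lt (by omega), hc'])
                subst hj'
                simp only [Matrix.cons_val_one, Matrix.head_cons, Matrix.cons_val_zero]
      exact ⟨e1.symm⟩
  have e : ∀ i : Fin (n + 1),
      {v : V // φ v = i} ≃ Fin (if i = 0 then 2 * n - 2 else 2) :=
    fun i => Classical.choice (hfib i)
  have iso2 : SimpleGraph.completeMultipartiteGraph
        (fun i : Fin (n + 1) => {v : V // φ v = i}) ≃g
      SimpleGraph.completeMultipartiteGraph
        (fun i : Fin (n + 1) => Fin (if i = 0 then 2 * n - 2 else 2)) :=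
    ⟨Equiv.sigmaCongrRight e, Iff.rfl⟩
  exact ⟨iso1.trans iso2⟩
end

section
/- For $n \geq 2$, the distance Laplacian spectrum of $\Gamma_{Q_{4n}} = K_{2n-2,2,\ldots,2}$ (with $n$ parts of size 2, on $4n-2$ vertices) consists of the eigenvalue $0$ with multiplicity $1$, the eigenvalues $4n-2$ and $4n$ each with multiplicity $n$, and the eigenvalue $6n-4$ with multiplicity $2n-3$. In particular, $\Gamma_{Q_{4n}}$ is distance Laplacian integral for all $n$. -/
open Polynomial

/-- The distance Laplacian matrix `Tr(G) - D(G)`. -/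
noncomputable def distLapMatrix {V : Type*} [Fintype V] [DecidableEq V] (G : SimpleGraph V) :
    Matrix V V ℝ :=
  Matrix.diagonal (fun v => ∑ u, (G.dist v u : ℝ)) - distMatrix G

open Finset

section Helpers

variable {R : Type*} [CommRing R]

lemma sum_fin_delta {m : ℕ} (t : ℕ) (ht : t < m) (f : Fin m → R) :
    ∑ b : Fin m, (if b.val = t then f b else 0) = f ⟨t, ht⟩ := by
  rw [show (fun b : Fin m => if b.val = t then f b else 0)
      = fun b : Fin m => if b = ⟨t, ht⟩ then f b else 0 from
    funext fun b => by simp [Fin.ext_iff]]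
  simp [Finset.sum_ite_eq']

lemma sum_fin_const {m : ℕ} (c : R) : ∑ _b : Fin m, c = (m : R) * c := by
  simp [Finset.sum_const, mul_comm]

lemma prod_fin_ite0 {m : ℕ} (hm : 0 < m) (p q : R[X]) :
    (∏ b : Fin m, (if b.val = 0 then p else q)) = p * q ^ (m - 1) := by
  obtain ⟨c, rfl⟩ : ∃ c, m = c + 1 := ⟨m - 1, by omega⟩
  rw [Fin.prod_univ_succ]
  simp [Fin.val_succ]

lemma charpoly_of_conj {ι : Type*} [Fintype ι] [DecidableEq ι]
    (M P Q Δ : Matrix ι ι R) [IsDomain R]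
    (hinv : Q * P = 1) (h : M * P = P * Δ) : M.charpoly = Δ.charpoly := by
  have hPC : M.charmatrix * P.map C = P.map C * Δ.charmatrix := by
    unfold Matrix.charmatrix
    rw [sub_mul, mul_sub]
    congr 1
    · rw [Matrix.scalar_commute]
      intro r; exact Polynomial.commute_X r
    · simp only [RingHom.mapMatrix_apply]
      rw [← Matrix.map_mul, ← Matrix.map_mul, h]
  have hdet := congrArg Matrix.det hPC
  rw [Matrix.det_mul, Matrix.det_mul] at hdet
  have hdP : (P.map (C : R →+* R[X])).det = C P.det := ((C : R →+* R[X]).map_det P).symm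
  have hPne : (P.map (C : R →+* R[X])).det ≠ 0 := by
    rw [hdP]
    intro hc
    have : P.det = 0 := by
      have := Polynomial.C_injective (R := R)
      exact this (by simpa using hc)
    have h1 : Q.det * P.det = 1 := by
      rw [← Matrix.det_mul, hinv, Matrix.det_one]
    rw [this, mul_zero] at h1
    exact one_ne_zero h1.symm
  unfold Matrix.charpoly
  rw [mul_comm (P.map C).det _] at hdet
  exact mul_right_cancel₀ hPne hdet

lemma charpoly_diagonal {ι : Type*} [Fintype ι] [DecidableEq ι] (d : ι → R) :
    (Matrix.diagonal d).charpoly = ∏ v, (X - C (d v)) := by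
  unfold Matrix.charpoly
  have : (Matrix.diagonal d).charmatrix = Matrix.diagonal fun v => X - C (d v) := by
    ext u v
    by_cases h : u = v
    · subst h; simp
    · simp [Matrix.charmatrix_apply_ne _ _ _ h, Matrix.diagonal_apply_ne _ h,
        Matrix.diagonal_apply_ne _ h]
  rw [this, Matrix.det_diagonal]

end Helpers

section Quaternion

variable (n : ℕ)

/-- part sizes -/
def mq (i : Fin (n + 1)) : ℕ := if i = 0 then 2 * n - 2 else 2

/-- the graph -/
def Gq : SimpleGraph ((i : Fin (n + 1)) × Fin (mq n i)) :=
  SimpleGraph.completeMultipartiteGraph fun i : Fin (n + 1) => Fin (mq n i)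

abbrev Vq := (i : Fin (n + 1)) × Fin (mq n i)

variable {n}

lemma mq_pos (hn : 2 ≤ n) (i : Fin (n + 1)) : 0 < mq n i := by
  unfold mq; split <;> omega

lemma mq_ne_zero (i : Fin (n + 1)) (h : i ≠ 0) : mq n i = 2 := by
  unfold mq; simp [h]

lemma Gq_adj (u v : Vq n) : (Gq n).Adj u v ↔ u.1 ≠ v.1 := Iff.rfl

lemma sigma_eq_iff (u v : Vq n) : u = v ↔ u.1 = v.1 ∧ u.2.val = v.2.val := by
  constructor
  · rintro rfl; exact ⟨rfl, rfl⟩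
  · obtain ⟨i, k⟩ := u; obtain ⟨j, l⟩ := v
    rintro ⟨h1, h2⟩
    dsimp at h1 h2
    subst h1
    simp [Fin.ext_iff, h2]

lemma Gq_dist (hn : 2 ≤ n) (u v : Vq n) :
    (Gq n).dist u v = if u = v then 0 else if u.1 = v.1 then 2 else 1 := by
  by_cases h : u = v
  · simp [h]
  · rw [if_neg h]
    by_cases h1 : u.1 = v.1
    · rw [if_pos h1]
      -- find another part
      have hn1 : 1 < n + 1 := by omega
      set j : Fin (n + 1) := if u.1 = 0 then ⟨1, hn1⟩ else 0 with hj
      have hju : j ≠ u.1 := by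
        rw [hj]; split
        · rename_i h0; rw [h0]; intro hc; exact absurd (congrArg Fin.val hc) (by simp)
        · rename_i h0; exact fun hc => h0 hc.symm
      have hjv : j ≠ v.1 := h1 ▸ hju
      set w : Vq n := ⟨j, ⟨0, mq_pos hn j⟩⟩ with hw
      have a1 : (Gq n).Adj u w := by rw [Gq_adj]; simp only [hw]; exact fun hc => hju hc.symm
      have a2 : (Gq n).Adj w v := by rw [Gq_adj]; exact hjv
      let p : (Gq n).Walk u v := SimpleGraph.Walk.cons a1 a2.toWalk
      have hplen : p.length = 2 := rfl
      have hle : (Gq n).dist u v ≤ 2 := by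
        have hl := SimpleGraph.dist_le p
        omega
      have hne0 : (Gq n).dist u v ≠ 0 := by
        intro hc
        rcases SimpleGraph.dist_eq_zero_iff_eq_or_not_reachable.mp hc with h' | h'
        · exact h h'
        · exact h' ⟨p⟩
      have hne1 : (Gq n).dist u v ≠ 1 := by
        intro hc
        exact (SimpleGraph.dist_eq_one_iff_adj.mp hc) h1
      omega
    · rw [if_neg h1]
      exact SimpleGraph.dist_eq_one_iff_adj.mpr h1


variable (n)

noncomputable def NR : ℝ := 4 * (n : ℝ) - 2

noncomputable def mqR (i : Fin (n + 1)) : ℝ := (mq n i : ℝ)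

/-- eigenvector matrix -/
noncomputable def Pm : Matrix (Vq n) (Vq n) ℝ := fun u v =>
  if v.2.val = 0 then
    if v.1 = 0 then 1
    else if u.1 = v.1 then 1 else if u.1 = 0 then -(((n : ℝ) - 1)⁻¹) else 0
  else
    if u.1 = v.1 then (if u.2.val = v.2.val then 1 else 0) - (if u.2.val = 0 then 1 else 0)
    else 0

/-- inverse of `Pm` -/
noncomputable def Rm : Matrix (Vq n) (Vq n) ℝ := fun u v =>
  if u.2.val = 0 then
    if u.1 = 0 then (NR n)⁻¹
    else (if v.1 = u.1 then (2 : ℝ)⁻¹ else 0) - (NR n)⁻¹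
  else
    if v.1 = u.1 then (if v.2.val = u.2.val then 1 else 0) - (mqR n u.1)⁻¹ else 0

/-- eigenvalues -/
noncomputable def dd : Vq n → ℝ := fun v =>
  if v.2.val = 0 then (if v.1 = 0 then 0 else NR n) else NR n + mqR n v.1

variable {n}

lemma hnR (hn : 2 ≤ n) : (2 : ℝ) ≤ (n : ℝ) := by exact_mod_cast hn

lemma n1_ne (hn : 2 ≤ n) : (n : ℝ) - 1 ≠ 0 := by have := hnR hn; intro h; linarith

lemma NR_ne (hn : 2 ≤ n) : NR n ≠ 0 := by
  have := hnR hn; unfold NR; intro h; linarith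

lemma mqR_zero (hn : 2 ≤ n) : mqR n 0 = 2 * (n : ℝ) - 2 := by
  unfold mqR mq
  rw [if_pos rfl, Nat.cast_sub (by omega)]
  push_cast; ring

lemma mqR_ne_zero (i : Fin (n + 1)) (h : i ≠ 0) : mqR n i = 2 := by
  unfold mqR; rw [mq_ne_zero i h]; norm_num

lemma mqR_pos (hn : 2 ≤ n) (i : Fin (n + 1)) : 0 < mqR n i := by
  unfold mqR; exact_mod_cast mq_pos hn i

lemma sumMR (hn : 2 ≤ n) : ∑ a, mqR n a = NR n := by
  rw [Fin.sum_univ_succ, mqR_zero hn]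
  have h2 : ∀ a : Fin n, mqR n a.succ = 2 := fun a => mqR_ne_zero _ (Fin.succ_ne_zero a)
  rw [Finset.sum_congr rfl fun a _ => h2 a, sum_fin_const]
  unfold NR; ring

lemma Scol (hn : 2 ≤ n) (a : Fin (n + 1)) (v : Vq n) :
    ∑ b : Fin (mq n a), Pm n ⟨a, b⟩ v =
      if v.2.val = 0 then
        (if v.1 = 0 then mqR n a else if a = v.1 then 2 else if a = 0 then -2 else 0)
      else 0 := by
  obtain ⟨j, l⟩ := v
  dsimp only
  by_cases hl : l.val = 0
  · rw [if_pos hl]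
    by_cases hj : j = 0
    · rw [if_pos hj]
      rw [show (fun b : Fin (mq n a) => Pm n ⟨a, b⟩ ⟨j, l⟩) = fun _ => (1 : ℝ) from
        funext fun b => by simp [Pm, hl, hj]]
      rw [sum_fin_const, mul_one]; rfl
    · rw [if_neg hj]
      rw [show (fun b : Fin (mq n a) => Pm n ⟨a, b⟩ ⟨j, l⟩) =
          fun _ => (if a = j then (1 : ℝ) else if a = 0 then -(((n : ℝ) - 1)⁻¹) else 0) from
        funext fun b => by simp [Pm, hl, hj]]
      rw [sum_fin_const]
      by_cases haj : a = j
      · rw [if_pos haj, if_pos haj, mul_one]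
        subst haj
        exact_mod_cast mq_ne_zero a hj
      · rw [if_neg haj, if_neg haj]
        by_cases ha0 : a = 0
        · rw [if_pos ha0, if_pos ha0]
          subst ha0
          have : ((mq n 0 : ℕ) : ℝ) = 2 * (n : ℝ) - 2 := mqR_zero hn
          rw [this]
          have := n1_ne hn
          field_simp
        · rw [if_neg ha0, if_neg ha0, mul_zero]
  · rw [if_neg hl]
    by_cases haj : a = j
    · subst haj
      rw [show (fun b : Fin (mq n a) => Pm n ⟨a, b⟩ ⟨a, l⟩) =
          fun b : Fin (mq n a) =>
            (if b.val = l.val then (1 : ℝ) else 0) - (if b.val = 0 then 1 else 0) from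
        funext fun b => by simp [Pm, hl]]
      rw [Finset.sum_sub_distrib]
      rw [sum_fin_delta l.val l.isLt (fun _ => (1 : ℝ)),
        sum_fin_delta 0 (mq_pos hn a) (fun _ => (1 : ℝ))]
      ring
    · rw [show (fun b : Fin (mq n a) => Pm n ⟨a, b⟩ ⟨j, l⟩) = fun _ => (0 : ℝ) from
        funext fun b => by simp [Pm, hl, haj]]
      simp

lemma Tcol (hn : 2 ≤ n) (v : Vq n) :
    ∑ a, ∑ b : Fin (mq n a), Pm n ⟨a, b⟩ v =
      if v.2.val = 0 then (if v.1 = 0 then NR n else 0) else 0 := by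
  rw [Finset.sum_congr rfl fun a _ => Scol hn a v]
  obtain ⟨j, l⟩ := v
  dsimp only
  by_cases hl : l.val = 0
  · simp only [hl, if_true, if_pos]
    by_cases hj : j = 0
    · simp only [hj, if_true, if_pos]
      exact sumMR hn
    · simp only [hj, if_false]
      rw [show (fun a : Fin (n + 1) =>
            if a = j then (2 : ℝ) else if a = 0 then -2 else 0) =
          fun a : Fin (n + 1) =>
            (if a = j then (2 : ℝ) else 0) + (if a = 0 then -2 else 0) from
        funext fun a => by
          by_cases h1 : a = j
          · subst h1; simp [hj]
          · simp [h1]]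
      rw [Finset.sum_add_distrib, Finset.sum_ite_eq', Finset.sum_ite_eq']
      simp
  · simp [hl]

lemma trans_eq (hn : 2 ≤ n) (u : Vq n) :
    ∑ w, ((Gq n).dist u w : ℝ) = NR n + mqR n u.1 - 2 := by
  obtain ⟨i, k⟩ := u
  rw [← Finset.univ_sigma_univ, Finset.sum_sigma]
  have step : ∀ (a : Fin (n + 1)) (b : Fin (mq n a)), ((Gq n).dist ⟨i, k⟩ ⟨a, b⟩ : ℝ) =
      1 + (if a = i then 1 - 2 * (if b.val = k.val then 1 else 0) else 0) := by
    intro a b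
    rw [Gq_dist hn]
    by_cases ha : a = i
    · subst ha
      by_cases hb : (b : ℕ) = (k : ℕ)
      · have hb' : b = k := Fin.ext hb
        subst hb'
        simp; norm_num
      · have hne : (⟨a, k⟩ : Vq n) ≠ ⟨a, b⟩ := by
          rw [Ne, sigma_eq_iff]
          dsimp only
          intro hc
          exact hb (hc.2.symm)
        simp [hne, hb]; norm_num
    · have hne : (⟨i, k⟩ : Vq n) ≠ ⟨a, b⟩ := by
          rw [Ne, sigma_eq_iff]
          dsimp only
          intro hc
          exact ha hc.1.symm
      have hne2 : ¬((⟨i, k⟩ : Vq n).fst = (⟨a, b⟩ : Vq n).fst) := fun hc => ha hc.symm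
      rw [if_neg hne, if_neg hne2, if_neg ha]
      norm_num
  rw [Finset.sum_congr rfl fun a _ => Finset.sum_congr rfl fun b _ => step a b]
  have inner : ∀ a : Fin (n + 1),
      (∑ b : Fin (mq n a), (1 + (if a = i then 1 - 2 * (if b.val = k.val then 1 else 0) else 0)))
        = mqR n a + (if a = i then mqR n i - 2 else 0) := by
    intro a
    by_cases ha : a = i
    · subst ha
      simp only [eq_self_iff_true, if_true]
      rw [Finset.sum_add_distrib, sum_fin_const, mul_one, Finset.sum_sub_distrib,
        sum_fin_const, ← Finset.mul_sum, sum_fin_delta k.val k.isLt (fun _ => (1 : ℝ))]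
      unfold mqR; ring
    · simp only [ha, if_false]
      rw [Finset.sum_add_distrib, sum_fin_const, mul_one]
      simp [mqR]
  rw [Finset.sum_congr rfl fun a _ => inner a, Finset.sum_add_distrib, sumMR hn,
    Finset.sum_ite_eq']
  simp only [Finset.mem_univ, if_true]
  ring

lemma Mform (hn : 2 ≤ n) (i : Fin (n + 1)) (k : Fin (mq n i)) (a : Fin (n + 1))
    (b : Fin (mq n a)) :
    distLapMatrix (Gq n) ⟨i, k⟩ ⟨a, b⟩ =
      -1 + (if a = i then (NR n + mqR n i) * (if b.val = k.val then 1 else 0) - 1 else 0) := by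
  unfold distLapMatrix distMatrix
  simp only [Matrix.sub_apply, Matrix.diagonal_apply, Matrix.of_apply]
  rw [Gq_dist hn]
  by_cases ha : a = i
  · subst ha
    by_cases hb : (b : ℕ) = (k : ℕ)
    · have hb' : b = k := Fin.ext hb
      subst hb'
      rw [if_pos rfl, if_pos rfl, trans_eq hn]
      simp only [hb, if_pos rfl]
      push_cast
      ring
    · have hne : (⟨a, k⟩ : Vq n) ≠ ⟨a, b⟩ := by
        rw [Ne, sigma_eq_iff]; dsimp only; intro hc; exact hb hc.2.symm
      rw [if_neg hne, if_neg hne, if_pos rfl]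
      have hb2 : ¬((b : ℕ) = (k : ℕ)) := hb
      simp [hb2]
      norm_num
  · have hne : (⟨i, k⟩ : Vq n) ≠ ⟨a, b⟩ := by
      rw [Ne, sigma_eq_iff]; dsimp only; intro hc; exact ha hc.1.symm
    have hne2 : ¬(i = a) := fun hc => ha hc.symm
    rw [if_neg hne, if_neg hne, if_neg hne2, if_neg ha]
    norm_num

lemma sum_ite_outer (i : Fin (n + 1)) (f : ∀ a : Fin (n + 1), Fin (mq n a) → ℝ) :
    (∑ a, ∑ b : Fin (mq n a), if a = i then f a b else 0) = ∑ b : Fin (mq n i), f i b := by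
  have h1 : ∀ a : Fin (n + 1), (∑ b : Fin (mq n a), if a = i then f a b else 0)
      = if a = i then ∑ b : Fin (mq n a), f a b else 0 := by
    intro a; by_cases h : a = i <;> simp [h]
  rw [Finset.sum_congr rfl fun a _ => h1 a, Finset.sum_ite_eq']
  simp

lemma RP (hn : 2 ≤ n) : Rm n * Pm n = 1 := by
  have hNR := NR_ne hn
  ext u v
  obtain ⟨i, k⟩ := u; obtain ⟨j, l⟩ := v
  have hone : (if (⟨i, k⟩ : Vq n) = ⟨j, l⟩ then (1 : ℝ) else 0)
      = if i = j ∧ (k : ℕ) = (l : ℕ) then 1 else 0 := by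
    by_cases h : (⟨i, k⟩ : Vq n) = ⟨j, l⟩
    · rw [if_pos h, if_pos ((sigma_eq_iff _ _).mp h)]
    · rw [if_neg h, if_neg (fun hc => h ((sigma_eq_iff _ _).mpr hc))]
  rw [Matrix.mul_apply, ← Finset.univ_sigma_univ, Finset.sum_sigma, Matrix.one_apply, hone]
  by_cases hk : (k : ℕ) = 0
  · by_cases hi : i = 0
    · have hR : ∀ (a : Fin (n + 1)) (b : Fin (mq n a)), Rm n ⟨i, k⟩ ⟨a, b⟩ = (NR n)⁻¹ := by
        intro a b; simp [Rm, hk, hi]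
      rw [Finset.sum_congr rfl fun a _ => Finset.sum_congr rfl fun b _ => by rw [hR a b]]
      simp only [← Finset.mul_sum]
      rw [Tcol hn ⟨j, l⟩]
      dsimp only
      by_cases hl : (l : ℕ) = 0
      · by_cases hj : j = 0
        · rw [if_pos hl, if_pos hj, if_pos ⟨by rw [hi, hj], by rw [hk, hl]⟩]
          exact inv_mul_cancel₀ hNR
        · rw [if_pos hl, if_neg hj, mul_zero, if_neg]
          rintro ⟨h1, -⟩; exact hj (by rw [← h1, hi])
      · rw [if_neg hl, mul_zero, if_neg]
        rintro ⟨-, h2⟩; exact hl (by rw [← h2, hk])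
    · have hR : ∀ (a : Fin (n + 1)) (b : Fin (mq n a)),
          Rm n ⟨i, k⟩ ⟨a, b⟩ * Pm n ⟨a, b⟩ ⟨j, l⟩ =
            (if a = i then (2 : ℝ)⁻¹ * Pm n ⟨a, b⟩ ⟨j, l⟩ else 0) -
              (NR n)⁻¹ * Pm n ⟨a, b⟩ ⟨j, l⟩ := by
        intro a b
        have : Rm n ⟨i, k⟩ ⟨a, b⟩ = (if a = i then (2 : ℝ)⁻¹ else 0) - (NR n)⁻¹ := by
          simp [Rm, hk, hi]
        rw [this, sub_mul, ite_mul, zero_mul]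
      rw [Finset.sum_congr rfl fun a _ => Finset.sum_congr rfl fun b _ => hR a b,
        Finset.sum_congr rfl fun a _ => Finset.sum_sub_distrib _ _, Finset.sum_sub_distrib,
        sum_ite_outer i _]
      simp only [← Finset.mul_sum]
      rw [Scol hn i ⟨j, l⟩, Tcol hn ⟨j, l⟩]
      dsimp only
      by_cases hl : (l : ℕ) = 0
      · by_cases hj : j = 0
        · rw [if_pos hl, if_pos hl, if_pos hj, if_pos hj, mqR_ne_zero i hi, if_neg]
          · rw [inv_mul_cancel₀ hNR]; norm_num
          · rintro ⟨h1, -⟩; exact hi (by rw [h1, hj])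
        · rw [if_pos hl, if_pos hl, if_neg hj, if_neg hj, mul_zero, sub_zero]
          by_cases hij : i = j
          · rw [if_pos hij, if_pos ⟨hij, by rw [hk, hl]⟩]; norm_num
          · rw [if_neg hij, if_neg hi, if_neg (fun hc => hij hc.1)]; norm_num
      · rw [if_neg hl, if_neg hl, mul_zero, mul_zero, sub_zero, if_neg]
        rintro ⟨-, h2⟩; exact hl (by rw [← h2, hk])
  · have hR : ∀ (a : Fin (n + 1)) (b : Fin (mq n a)),
        Rm n ⟨i, k⟩ ⟨a, b⟩ * Pm n ⟨a, b⟩ ⟨j, l⟩ =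
          if a = i then
            ((if (b : ℕ) = (k : ℕ) then (1 : ℝ) else 0) - (mqR n i)⁻¹) * Pm n ⟨a, b⟩ ⟨j, l⟩
          else 0 := by
      intro a b
      have : Rm n ⟨i, k⟩ ⟨a, b⟩ =
          if a = i then (if (b : ℕ) = (k : ℕ) then (1 : ℝ) else 0) - (mqR n i)⁻¹ else 0 := by
        simp [Rm, hk]
      rw [this, ite_mul, zero_mul]
    have expand : (∑ b : Fin (mq n i),
        ((if (b : ℕ) = (k : ℕ) then (1 : ℝ) else 0) - (mqR n i)⁻¹) * Pm n ⟨i, b⟩ ⟨j, l⟩)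
        = ∑ b : Fin (mq n i),
            ((if (b : ℕ) = (k : ℕ) then Pm n ⟨i, b⟩ ⟨j, l⟩ else 0) -
              (mqR n i)⁻¹ * Pm n ⟨i, b⟩ ⟨j, l⟩) :=
      Finset.sum_congr rfl fun b _ => by rw [sub_mul, ite_mul, one_mul, zero_mul]
    rw [Finset.sum_congr rfl fun a _ => Finset.sum_congr rfl fun b _ => hR a b,
      sum_ite_outer i _, expand, Finset.sum_sub_distrib,
      sum_fin_delta (k : ℕ) k.isLt (fun b => Pm n ⟨i, b⟩ ⟨j, l⟩),
      ← Finset.mul_sum, Scol hn i ⟨j, l⟩]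
    have hmq := (mqR_pos hn i).ne'
    dsimp only
    by_cases hl : (l : ℕ) = 0
    · by_cases hj : j = 0
      · rw [if_pos hl, if_pos hj, if_neg]
        · have : Pm n ⟨i, ⟨(k : ℕ), k.isLt⟩⟩ ⟨j, l⟩ = 1 := by simp [Pm, hl, hj]
          rw [this, inv_mul_cancel₀ hmq]; norm_num
        · rintro ⟨-, h2⟩; exact hk (by rw [h2, hl])
      · rw [if_pos hl, if_neg hj]
        by_cases hij : i = j
        · have : Pm n ⟨i, ⟨(k : ℕ), k.isLt⟩⟩ ⟨j, l⟩ = 1 := by simp [Pm, hl, hj, hij]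
          rw [this, if_pos hij, mqR_ne_zero i (by rw [hij]; exact hj), if_neg]
          · norm_num
          · rintro ⟨-, h2⟩; exact hk (by rw [h2, hl])
        · by_cases hi0 : i = 0
          · have : Pm n ⟨i, ⟨(k : ℕ), k.isLt⟩⟩ ⟨j, l⟩ = -(((n : ℝ) - 1)⁻¹) := by
              simp [Pm, hl, hj, hi0, show ¬((0 : Fin (n + 1)) = j) from fun hc => hj hc.symm]
            rw [this, if_neg hij, if_pos hi0, if_neg (fun hc : i = j ∧ _ => hij hc.1)]
            rw [hi0, mqR_zero hn]
            have h1 := n1_ne hn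
            have h2 : 2 * (n : ℝ) - 2 ≠ 0 := by
              have := hnR hn; intro h; linarith
            field_simp
            ring
          · have : Pm n ⟨i, ⟨(k : ℕ), k.isLt⟩⟩ ⟨j, l⟩ = 0 := by
              simp [Pm, hl, hj, hij, hi0]
            rw [this, if_neg hij, if_neg hi0, if_neg (fun hc : i = j ∧ _ => hij hc.1)]
            norm_num
    · rw [if_neg hl, mul_zero, sub_zero]
      by_cases hij : i = j
      · have : Pm n ⟨i, ⟨(k : ℕ), k.isLt⟩⟩ ⟨j, l⟩ =
            if (k : ℕ) = (l : ℕ) then (1 : ℝ) else 0 := by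
          simp only [Pm]
          rw [if_neg hl, if_pos hij, if_neg hk, sub_zero]
        rw [this]
        by_cases hkl : (k : ℕ) = (l : ℕ)
        · rw [if_pos hkl, if_pos ⟨hij, hkl⟩]
        · rw [if_neg hkl, if_neg (fun hc => hkl hc.2)]
      · have : Pm n ⟨i, ⟨(k : ℕ), k.isLt⟩⟩ ⟨j, l⟩ = 0 := by
          simp [Pm, hl, hij]
        rw [this, if_neg (fun hc : i = j ∧ _ => hij hc.1)]

lemma MP (hn : 2 ≤ n) : distLapMatrix (Gq n) * Pm n = Pm n * Matrix.diagonal (dd n) := by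
  ext u v
  obtain ⟨i, k⟩ := u; obtain ⟨j, l⟩ := v
  rw [Matrix.mul_diagonal, Matrix.mul_apply, ← Finset.univ_sigma_univ, Finset.sum_sigma]
  have hstep : ∀ (a : Fin (n + 1)) (b : Fin (mq n a)),
      distLapMatrix (Gq n) ⟨i, k⟩ ⟨a, b⟩ * Pm n ⟨a, b⟩ ⟨j, l⟩ =
        -Pm n ⟨a, b⟩ ⟨j, l⟩ +
          (if a = i then
            (NR n + mqR n i) * (if (b : ℕ) = (k : ℕ) then Pm n ⟨a, b⟩ ⟨j, l⟩ else 0) -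
              Pm n ⟨a, b⟩ ⟨j, l⟩
          else 0) := by
    intro a b
    rw [Mform hn i k a b, add_mul, neg_one_mul, ite_mul, zero_mul, sub_mul, one_mul,
      mul_assoc, ite_mul, one_mul, zero_mul]
  rw [Finset.sum_congr rfl fun a _ => Finset.sum_congr rfl fun b _ => hstep a b,
    Finset.sum_congr rfl fun a _ => Finset.sum_add_distrib, Finset.sum_add_distrib,
    sum_ite_outer i _, Finset.sum_sub_distrib, ← Finset.mul_sum,
    sum_fin_delta (k : ℕ) k.isLt (fun b => Pm n ⟨i, b⟩ ⟨j, l⟩)]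
  simp only [Finset.sum_neg_distrib]
  rw [Tcol hn ⟨j, l⟩, Scol hn i ⟨j, l⟩]
  dsimp only
  unfold dd
  dsimp only
  by_cases hl : (l : ℕ) = 0
  · by_cases hj : j = 0
    · have h1 : Pm n ⟨i, ⟨(k : ℕ), k.isLt⟩⟩ ⟨j, l⟩ = 1 := by simp [Pm, hl, hj]
      rw [if_pos hl, if_pos hl, if_pos hj, if_pos hj, if_pos hl, if_pos hj, h1]
      ring
    · rw [if_pos hl, if_pos hl, if_pos hl, if_neg hj, if_neg hj, if_neg hj, neg_zero, zero_add]
      by_cases hij : i = j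
      · have hi0 : i ≠ 0 := by rw [hij]; exact hj
        have h1 : Pm n ⟨i, ⟨(k : ℕ), k.isLt⟩⟩ ⟨j, l⟩ = 1 := by simp [Pm, hl, hj, hij]
        rw [h1, if_pos hij, mqR_ne_zero i hi0]; ring
      · by_cases hi0 : i = 0
        · have h1 : Pm n ⟨i, ⟨(k : ℕ), k.isLt⟩⟩ ⟨j, l⟩ = -(((n : ℝ) - 1)⁻¹) := by
            simp [Pm, hl, hj, hi0, show ¬((0 : Fin (n + 1)) = j) from fun hc => hj hc.symm]
          rw [h1, if_neg hij, if_pos hi0, hi0, mqR_zero hn]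
          have hne := n1_ne hn
          field_simp
          ring
        · have h1 : Pm n ⟨i, ⟨(k : ℕ), k.isLt⟩⟩ ⟨j, l⟩ = 0 := by simp [Pm, hl, hj, hij, hi0]
          rw [h1, if_neg hij, if_neg hi0]; ring
  · rw [if_neg hl, if_neg hl, if_neg hl, neg_zero, zero_add, sub_zero]
    by_cases hij : i = j
    · subst hij
      show (NR n + mqR n i) * Pm n ⟨i, k⟩ ⟨i, l⟩ = Pm n ⟨i, k⟩ ⟨i, l⟩ * (NR n + mqR n i)
      ring
    · have h1 : Pm n ⟨i, ⟨(k : ℕ), k.isLt⟩⟩ ⟨j, l⟩ = 0 := by simp [Pm, hl, hij]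
      rw [h1]; ring

lemma charpoly_eq (hn : 2 ≤ n) :
    (distLapMatrix (Gq n)).charpoly =
      X * (X - C (4 * (n : ℝ) - 2)) ^ n * (X - C (4 * (n : ℝ))) ^ n *
        (X - C (6 * (n : ℝ) - 4)) ^ (2 * n - 3) := by
  rw [charpoly_of_conj (distLapMatrix (Gq n)) (Pm n) (Rm n) (Matrix.diagonal (dd n)) (RP hn)
      (MP hn), charpoly_diagonal]
  rw [← Finset.univ_sigma_univ, Finset.prod_sigma]
  have hinner : ∀ a : Fin (n + 1), (∏ b : Fin (mq n a), (X - C (dd n ⟨a, b⟩)))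
      = (X - C (if a = 0 then (0 : ℝ) else NR n)) * (X - C (NR n + mqR n a)) ^ (mq n a - 1) := by
    intro a
    have hb : ∀ b : Fin (mq n a), (X - C (dd n ⟨a, b⟩)) =
        if (b : ℕ) = 0 then (X - C (if a = 0 then (0 : ℝ) else NR n))
        else (X - C (NR n + mqR n a)) := by
      intro b; unfold dd; dsimp only; by_cases hb : (b : ℕ) = 0 <;> simp [hb]
    rw [Finset.prod_congr rfl fun b _ => hb b, prod_fin_ite0 (mq_pos hn a)]
  rw [Finset.prod_congr rfl fun a _ => hinner a, Fin.prod_univ_succ]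
  have h0 : (X - C (if (0 : Fin (n + 1)) = 0 then (0 : ℝ) else NR n)) = X := by simp
  have hm0 : mq n 0 - 1 = 2 * n - 3 := by unfold mq; simp; omega
  have hNm : NR n + mqR n 0 = 6 * (n : ℝ) - 4 := by rw [mqR_zero hn]; unfold NR; ring
  have hsucc : ∀ a : Fin n,
      (X - C (if a.succ = 0 then (0 : ℝ) else NR n)) *
          (X - C (NR n + mqR n a.succ)) ^ (mq n a.succ - 1) =
        (X - C (4 * (n : ℝ) - 2)) * (X - C (4 * (n : ℝ))) := by
    intro a
    rw [if_neg (Fin.succ_ne_zero a), mqR_ne_zero _ (Fin.succ_ne_zero a),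
      mq_ne_zero _ (Fin.succ_ne_zero a)]
    unfold NR
    rw [show (4 * (n : ℝ) - 2) + 2 = 4 * (n : ℝ) by ring]
    norm_num
  rw [Finset.prod_congr rfl fun a _ => hsucc a, Finset.prod_const, h0, hm0, hNm,
    Finset.card_univ, Fintype.card_fin, mul_pow]
  ring

/-- For `n ≥ 2`, the distance Laplacian spectrum of `Γ_{Q_{4n}} = K_{2n-2,2,…,2}` consists
of `0` with multiplicity `1`, `4n-2` and `4n` each with multiplicity `n`, and `6n-4` with
multiplicity `2n-3`; in particular the graph is distance Laplacian integral. -/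
theorem distLaplacian_spectrum_quaternion (n : ℕ) (hn : 2 ≤ n) :
    (distLapMatrix (SimpleGraph.completeMultipartiteGraph
        fun i : Fin (n + 1) => Fin (if i = 0 then 2 * n - 2 else 2))).charpoly =
      X * (X - C (4 * (n : ℝ) - 2)) ^ n * (X - C (4 * (n : ℝ))) ^ n *
        (X - C (6 * (n : ℝ) - 4)) ^ (2 * n - 3) ∧
    ∀ μ ∈ (distLapMatrix (SimpleGraph.completeMultipartiteGraph
        fun i : Fin (n + 1) => Fin (if i = 0 then 2 * n - 2 else 2))).charpoly.roots,
      ∃ z : ℤ, μ = (z : ℝ) := by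
  have key : (distLapMatrix (SimpleGraph.completeMultipartiteGraph
        fun i : Fin (n + 1) => Fin (if i = 0 then 2 * n - 2 else 2))).charpoly =
      X * (X - C (4 * (n : ℝ) - 2)) ^ n * (X - C (4 * (n : ℝ))) ^ n *
        (X - C (6 * (n : ℝ) - 4)) ^ (2 * n - 3) := charpoly_eq hn
  refine ⟨key, ?_⟩
  intro μ hμ
  rw [key] at hμ
  have hroot := Polynomial.isRoot_of_mem_roots hμ
  simp only [Polynomial.IsRoot, eval_mul, eval_pow, eval_sub, eval_X, eval_C] at hroot
  rcases mul_eq_zero.mp hroot with h12 | h4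
  · rcases mul_eq_zero.mp h12 with h123 | h3
    · rcases mul_eq_zero.mp h123 with h1 | h2
      · exact ⟨0, by simpa using h1⟩
      · have h := sub_eq_zero.mp (pow_eq_zero_iff (by omega : n ≠ 0) |>.mp h2)
        exact ⟨4 * n - 2, by push_cast; linarith⟩
    · have h := sub_eq_zero.mp (pow_eq_zero_iff (by omega : n ≠ 0) |>.mp h3)
      exact ⟨4 * n, by push_cast; linarith⟩
  · have h := sub_eq_zero.mp (pow_eq_zero_iff (by omega : 2 * n - 3 ≠ 0) |>.mp h4)
    exact ⟨6 * n - 4, by push_cast; linarith⟩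
end Quaternion
end

section
/- For $n \geq 4$, the distance Laplacian spectrum of the non-commuting graph of $QD_{2^n}$, i.e. of $K_{2^{n-1}-2,2,\ldots,2}$ with $2^{n-2}$ parts of size 2, consists of $0$ with multiplicity $1$, $2^n-2$ and $2^n$ each with multiplicity $2^{n-2}$, and $2^n + 2^{n-1} - 4$ with multiplicity $2^{n-1}-3$. In particular this graph is distance Laplacian integral. -/
open Polynomial

namespace QDP

open Matrix Finset

/-! ### sum helpers -/

lemma sum_range_pt (M t : ℕ) (A B : ℝ) (ht : t < M) :
    ∑ c ∈ Finset.range M, (if c = t then B else A) = B - A + M * A := by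
  have h : ∀ c ∈ Finset.range M, (if c = t then B else A)
      = (if c = t then B - A else 0) + A := by
    intro c _; split_ifs <;> ring
  rw [Finset.sum_congr rfl h, Finset.sum_add_distrib,
    Finset.sum_ite_eq' (Finset.range M) t (fun _ => B - A), Finset.sum_const,
    Finset.card_range, if_pos (Finset.mem_range.mpr ht)]
  push_cast; ring

lemma sum_range_pt2 (M t u : ℕ) (A B Bu : ℝ) (ht : t < M) (hu : u < M) (htu : t ≠ u) :
    ∑ c ∈ Finset.range M, (if c = t then B else if c = u then Bu else A)
      = B + Bu - 2 * A + M * A := by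
  have h : ∀ c ∈ Finset.range M, (if c = t then B else if c = u then Bu else A)
      = (if c = t then B - A else 0) + ((if c = u then Bu - A else 0) + A) := by
    intro c _
    rcases eq_or_ne c t with rfl | h1
    · rw [if_pos rfl, if_pos rfl, if_neg (by omega)]; ring
    · rw [if_neg h1, if_neg h1]; split_ifs <;> ring
  rw [Finset.sum_congr rfl h, Finset.sum_add_distrib, Finset.sum_add_distrib,
    Finset.sum_ite_eq' (Finset.range M) t (fun _ => B - A),
    Finset.sum_ite_eq' (Finset.range M) u (fun _ => Bu - A), Finset.sum_const,
    Finset.card_range, if_pos (Finset.mem_range.mpr ht), if_pos (Finset.mem_range.mpr hu)]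
  push_cast; ring

lemma sum_fin_pt {k : ℕ} (t : Fin k) (A B : ℝ) :
    ∑ i : Fin k, (if i = t then B else A) = B - A + k * A := by
  have h : ∀ i ∈ (Finset.univ : Finset (Fin k)), (if i = t then B else A)
      = (if i = t then B - A else 0) + A := by
    intro i _; split_ifs <;> ring
  rw [Finset.sum_congr rfl h, Finset.sum_add_distrib,
    Finset.sum_ite_eq' Finset.univ t (fun _ => B - A), Finset.sum_const,
    Finset.card_univ, Fintype.card_fin, if_pos (Finset.mem_univ t)]
  push_cast; ring

/-! ### The setup -/

abbrev V (m k : ℕ) := Σ i : Fin (k + 1), Fin (if i = 0 then m else 2)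

abbrev G (m k : ℕ) : SimpleGraph (V m k) :=
  SimpleGraph.completeMultipartiteGraph fun i : Fin (k + 1) => Fin (if i = 0 then m else 2)

/-- total number of vertices, as a real. -/
def Nr (m k : ℕ) : ℝ := m + 2 * k

/-- part sizes, as reals. -/
def sr (m : ℕ) {k : ℕ} (i : Fin (k + 1)) : ℝ := if i = 0 then (m : ℝ) else 2

/-- entries of the eigenvector matrix `P`; `(p,c)` is the row (a vertex), `(q,d)` the column. -/
def Pval (m : ℕ) {k : ℕ} (p : Fin (k + 1)) (c : ℕ) (q : Fin (k + 1)) (d : ℕ) : ℝ :=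
  if q = 0 then
    (if d = 0 then 1 else
      if p = 0 then (if c = 0 then 1 else if c = d then -1 else 0) else 0)
  else
    (if d = 0 then (if p = q then (m : ℝ) else if p = 0 then -2 else 0)
     else if p = q then (if c = 0 then 1 else -1) else 0)

def Pm (m k : ℕ) : Matrix (V m k) (V m k) ℝ := fun v w => Pval m v.1 v.2 w.1 w.2

/-- entries of the (scaled) inverse `C`; row `(q,d)`, column `(p,c)`. -/
def Cval (m k : ℕ) (q : Fin (k + 1)) (d : ℕ) (p : Fin (k + 1)) (c : ℕ) : ℝ :=
  if q = 0 then
    (if d = 0 then 1 else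
      if p = 0 then (if c = d then 1 - (m : ℝ) else 1) else 0)
  else
    (if d = 0 then (if p = q then Nr m k - 2 else -2)
     else if p = q then (if c = 0 then 1 else -1) else 0)

def Cm (m k : ℕ) : Matrix (V m k) (V m k) ℝ := fun w v => Cval m k w.1 w.2 v.1 v.2

def evv (m k : ℕ) (w : V m k) : ℝ :=
  if w.1 = 0 then (if (w.2 : ℕ) = 0 then 0 else Nr m k + m)
  else (if (w.2 : ℕ) = 0 then Nr m k else Nr m k + 2)

def ddv (m k : ℕ) (w : V m k) : ℝ :=
  if w.1 = 0 then (if (w.2 : ℕ) = 0 then Nr m k else (m : ℝ))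
  else (if (w.2 : ℕ) = 0 then 2 * m * Nr m k else 2)

def Mval (m k : ℕ) (p : Fin (k + 1)) (c : ℕ) (q : Fin (k + 1)) (d : ℕ) : ℝ :=
  if p = q then (if c = d then Nr m k + (if p = 0 then (m : ℝ) else 2) - 2 else -2) else -1

def Mm (m k : ℕ) : Matrix (V m k) (V m k) ℝ := fun v w => Mval m k v.1 v.2 w.1 w.2

lemma sigma_eq_iff {m k : ℕ} (v w : V m k) :
    v = w ↔ v.1 = w.1 ∧ (v.2 : ℕ) = (w.2 : ℕ) := by
  constructor
  · rintro rfl; exact ⟨rfl, rfl⟩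
  · obtain ⟨i, a⟩ := v; obtain ⟨j, b⟩ := w
    rintro ⟨h1, h2⟩
    dsimp at h1 h2
    subst h1
    cases Fin.ext h2; rfl

lemma sum_V {m k : ℕ} (f : V m k → ℝ) :
    ∑ u, f u = ∑ i : Fin (k + 1), ∑ e : Fin (if i = 0 then m else 2), f ⟨i, e⟩ := by
  rw [← Finset.univ_sigma_univ, Finset.sum_sigma]

lemma sum_partFun {m k : ℕ} (r : Fin (k + 1)) (g : ℕ → ℝ) (x : V m k → ℝ) :
    ∑ u : V m k, (if u.1 = r then g (u.2 : ℕ) else 0) * x u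
      = ∑ e : Fin (if r = 0 then m else 2), g (e : ℕ) * x ⟨r, e⟩ := by
  rw [sum_V (fun u => (if u.1 = r then g (u.2 : ℕ) else 0) * x u)]
  rw [Finset.sum_eq_single r]
  · simp
  · intro i _ hi
    apply Finset.sum_eq_zero
    intro e _
    simp [hi]
  · simp

lemma sum_point {m k : ℕ} (t : V m k) (A : ℝ) (x : V m k → ℝ) :
    ∑ u : V m k, (if u = t then A else 0) * x u = A * x t := by
  rw [Finset.sum_eq_single t] <;> simp +contextual

lemma Pcol_part {m k : ℕ} (hm : 2 ≤ m) (hk : 1 ≤ k) (r : Fin (k + 1)) (w : V m k) :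
    ∑ e : Fin (if r = 0 then m else 2), Pm m k ⟨r, e⟩ w =
      if (w.2 : ℕ) = 0 then
        (if w.1 = 0 then sr m r
         else if r = w.1 then 2 * (m : ℝ) else if r = 0 then -2 * (m : ℝ) else 0)
      else 0 := by
  obtain ⟨q, d⟩ := w
  have hsum : ∑ e : Fin (if r = 0 then m else 2), Pm m k ⟨r, e⟩ ⟨q, d⟩
      = ∑ c ∈ Finset.range (if r = 0 then m else 2), Pval m r c q (d : ℕ) :=
    Fin.sum_univ_eq_sum_range (fun c => Pval m r c q (d : ℕ)) _
  rw [hsum]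
  dsimp only
  by_cases hr : r = 0
  · subst hr
    rw [if_pos rfl]
    by_cases hq : q = 0
    · subst hq
      have hd : (d : ℕ) < m := by simpa using d.isLt
      by_cases hd0 : (d : ℕ) = 0
      · have h : ∀ c ∈ Finset.range m, Pval m (0 : Fin (k+1)) c 0 (d : ℕ) = 1 := by
          intro c _; simp [Pval, hd0]
        rw [Finset.sum_congr rfl h, Finset.sum_const, Finset.card_range]
        simp [sr, hd0]
      · have h : ∀ c ∈ Finset.range m, Pval m (0 : Fin (k+1)) c 0 (d : ℕ)
            = (if c = 0 then (1:ℝ) else if c = (d : ℕ) then -1 else 0) := by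
          intro c _; simp [Pval, hd0]
        rw [Finset.sum_congr rfl h,
          sum_range_pt2 m 0 (d : ℕ) 0 1 (-1) (by omega) hd (by omega)]
        simp [hd0]
        try ring
    · have h0q : (0 : Fin (k+1)) ≠ q := fun h => hq h.symm
      by_cases hd0 : (d : ℕ) = 0
      · have h : ∀ c ∈ Finset.range m, Pval m (0 : Fin (k+1)) c q (d : ℕ) = -2 := by
          intro c _; simp [Pval, hd0, hq, h0q]
        rw [Finset.sum_congr rfl h, Finset.sum_const, Finset.card_range]
        simp [hd0, hq, h0q]
        ring
      · have h : ∀ c ∈ Finset.range m, Pval m (0 : Fin (k+1)) c q (d : ℕ) = 0 := by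
          intro c _; simp [Pval, hd0, hq, h0q]
        rw [Finset.sum_congr rfl h]
        simp [hd0]
  · rw [if_neg hr]
    by_cases hq : q = 0
    · subst hq
      by_cases hd0 : (d : ℕ) = 0
      · have h : ∀ c ∈ Finset.range 2, Pval m r c 0 (d : ℕ) = 1 := by
          intro c _; simp [Pval, hd0]
        rw [Finset.sum_congr rfl h, Finset.sum_const, Finset.card_range]
        simp [sr, hd0, hr]
      · have h : ∀ c ∈ Finset.range 2, Pval m r c 0 (d : ℕ) = 0 := by
          intro c _; simp [Pval, hd0, hr]
        rw [Finset.sum_congr rfl h]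
        simp [hd0]
    · by_cases hd0 : (d : ℕ) = 0
      · by_cases hrq : r = q
        · have h : ∀ c ∈ Finset.range 2, Pval m r c q (d : ℕ) = (m : ℝ) := by
            intro c _; simp [Pval, hd0, hq, hrq]
          rw [Finset.sum_congr rfl h, Finset.sum_const, Finset.card_range]
          simp [hd0, hq, hrq]
          try ring
        · have h : ∀ c ∈ Finset.range 2, Pval m r c q (d : ℕ) = 0 := by
            intro c _; simp [Pval, hd0, hq, hrq, hr]
          rw [Finset.sum_congr rfl h]
          simp [hd0, hq, hrq, hr]
      · by_cases hrq : r = q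
        · have h : ∀ c ∈ Finset.range 2, Pval m r c q (d : ℕ)
              = (if c = 0 then (1:ℝ) else -1) := by
            intro c _; simp [Pval, hd0, hq, hrq]
          rw [Finset.sum_congr rfl h, Finset.sum_range_succ, Finset.sum_range_one]
          norm_num [hd0]
        · have h : ∀ c ∈ Finset.range 2, Pval m r c q (d : ℕ) = 0 := by
            intro c _; simp [Pval, hd0, hq, hrq]
          rw [Finset.sum_congr rfl h]
          simp [hd0]

lemma sum_sr {m k : ℕ} : ∑ i : Fin (k + 1), sr m i = Nr m k := by
  rw [Fin.sum_univ_succ]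
  simp only [sr, if_pos rfl, Nr]
  have : ∀ i : Fin k, (if i.succ = (0 : Fin (k+1)) then (m:ℝ) else 2) = 2 := by
    intro i; rw [if_neg (Fin.succ_ne_zero i)]
  rw [Finset.sum_congr rfl (fun i _ => this i), Finset.sum_const, Finset.card_univ,
    Fintype.card_fin]
  push_cast; ring

lemma Pcol_total {m k : ℕ} (hm : 2 ≤ m) (hk : 1 ≤ k) (w : V m k) :
    ∑ u : V m k, Pm m k u w
      = if w.1 = 0 ∧ (w.2 : ℕ) = 0 then Nr m k else 0 := by
  obtain ⟨q, d⟩ := w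
  rw [sum_V (fun u => Pm m k u ⟨q, d⟩)]
  have h := fun (r : Fin (k+1)) => Pcol_part hm hk r (⟨q, d⟩ : V m k)
  rw [Finset.sum_congr rfl (fun r _ => h r)]
  dsimp only
  by_cases hd0 : (d : ℕ) = 0
  · simp only [if_pos hd0]
    by_cases hq : q = 0
    · simp only [if_pos hq, hq, hd0, and_self, if_pos]
      exact sum_sr
    · simp only [if_neg hq, hq, hd0, false_and, if_neg, and_true, if_false]
      obtain ⟨q', rfl⟩ := Fin.eq_succ_of_ne_zero hq
      have h0 : ((0 : Fin (k+1)) = q'.succ) = False := by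
        simp [eq_comm, Fin.succ_ne_zero q']
      rw [Fin.sum_univ_succ]
      simp only [h0, if_false, eq_self_iff_true, if_true]
      have hterm : ∀ i : Fin k,
          (if i.succ = q'.succ then 2*(m:ℝ) else if i.succ = 0 then -2*(m:ℝ) else 0)
          = if i = q' then 2*(m:ℝ) else 0 := by
        intro i
        by_cases h : i = q'
        · simp [h]
        · rw [if_neg (fun hc => h (Fin.succ_injective _ hc)),
            if_neg (Fin.succ_ne_zero i), if_neg h]
      rw [Finset.sum_congr rfl (fun i _ => hterm i),
        Finset.sum_ite_eq' Finset.univ q' (fun _ => 2*(m:ℝ)), if_pos (Finset.mem_univ _)]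
      ring
  · simp [hd0]

lemma adj_iff {m k : ℕ} (u v : V m k) : (G m k).Adj u v ↔ u.1 ≠ v.1 := Iff.rfl

lemma one_ne_zero_fin {k : ℕ} (hk : 1 ≤ k) : (1 : Fin (k + 1)) ≠ 0 := by
  intro h
  have h2 : (1 : Fin (k+1)).val = 0 := by rw [h]; rfl
  rw [Fin.val_one', Nat.mod_eq_of_lt (by omega)] at h2
  exact one_ne_zero h2

lemma exists_other {m k : ℕ} (hm : 2 ≤ m) (hk : 1 ≤ k) (i : Fin (k + 1)) :
    ∃ t : V m k, t.1 ≠ i := by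
  by_cases hi : i = 0
  · refine ⟨⟨1, ⟨0, ?_⟩⟩, ?_⟩
    · rw [if_neg (one_ne_zero_fin hk)]; omega
    · rw [hi]; exact one_ne_zero_fin hk
  · exact ⟨⟨0, ⟨0, by rw [if_pos rfl]; omega⟩⟩, fun h => hi h.symm⟩

lemma dist_eq {m k : ℕ} (hm : 2 ≤ m) (hk : 1 ≤ k) (u v : V m k) :
    (G m k).dist u v = if u = v then 0 else if u.1 = v.1 then 2 else 1 := by
  by_cases huv : u = v
  · simp [huv]
  · rw [if_neg huv]
    by_cases hp : u.1 = v.1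
    · rw [if_pos hp]
      obtain ⟨t, ht⟩ := exists_other hm hk u.1
      have hadj1 : (G m k).Adj u t := (adj_iff u t).mpr (fun h => ht h.symm)
      have hadj2 : (G m k).Adj t v := (adj_iff t v).mpr (by rw [← hp]; exact ht)
      have hw : (G m k).Walk u v := .cons hadj1 (.cons hadj2 .nil)
      have hle : (G m k).dist u v ≤ 2 := by
        have h2 := SimpleGraph.dist_le
          (SimpleGraph.Walk.cons hadj1 (SimpleGraph.Walk.cons hadj2 SimpleGraph.Walk.nil))
        simpa using h2
      have h0 : (G m k).dist u v ≠ 0 := by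
        rw [SimpleGraph.dist_ne_zero_iff_ne_and_reachable]
        exact ⟨huv, ⟨hw⟩⟩
      have h1 : (G m k).dist u v ≠ 1 := by
        rw [Ne, SimpleGraph.dist_eq_one_iff_adj, adj_iff]
        simp [hp]
      omega
    · rw [if_neg hp]
      exact SimpleGraph.dist_eq_one_iff_adj.mpr ((adj_iff u v).mpr hp)

lemma sum_one {m k : ℕ} : ∑ _u : V m k, (1 : ℝ) = Nr m k := by
  rw [sum_V (fun _ => (1 : ℝ))]
  have h : ∀ i : Fin (k + 1), ∑ _e : Fin (if i = 0 then m else 2), (1 : ℝ) = sr m i := by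
    intro i
    rw [Finset.sum_const, Finset.card_univ, Fintype.card_fin]
    by_cases hi : i = 0 <;> simp [sr, hi]
  rw [Finset.sum_congr rfl (fun i _ => h i), sum_sr]

lemma transmission {m k : ℕ} (hm : 2 ≤ m) (hk : 1 ≤ k) (v : V m k) :
    ∑ u, ((G m k).dist v u : ℝ) = Nr m k + sr m v.1 - 2 := by
  have h : ∀ u : V m k, ((G m k).dist v u : ℝ)
      = 1 - (if v = u then 2 else 0) + (if u.1 = v.1 then 1 else 0) := by
    intro u
    rw [dist_eq hm hk v u]
    by_cases h1 : v = u
    · rw [if_pos h1, if_pos h1, if_pos (congrArg Sigma.fst h1).symm]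
      norm_num
    · rw [if_neg h1, if_neg h1]
      by_cases h2 : v.1 = u.1
      · rw [if_pos h2, if_pos h2.symm]; norm_num
      · rw [if_neg h2, if_neg (fun hc => h2 hc.symm)]; norm_num
  rw [Finset.sum_congr rfl (fun u _ => h u), Finset.sum_add_distrib, Finset.sum_sub_distrib]
  have hs1 := sum_one (m := m) (k := k)
  have hs2 : ∑ u : V m k, (if v = u then (2:ℝ) else 0) = 2 := by
    rw [Finset.sum_ite_eq]; simp
  have hs3 : ∑ u : V m k, (if u.1 = v.1 then (1:ℝ) else 0) = sr m v.1 := by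
    have hp := sum_partFun (m := m) (k := k) v.1 (fun _ => (1:ℝ)) (fun _ => (1:ℝ))
    simp only [mul_one] at hp
    rw [hp, Finset.sum_const, Finset.card_univ, Fintype.card_fin]
    by_cases hi : v.1 = 0 <;> simp [sr, hi]
  rw [hs1, hs2, hs3]
  ring

lemma lap_eq {m k : ℕ} (hm : 2 ≤ m) (hk : 1 ≤ k) :
    distLapMatrix (G m k) = Mm m k := by
  ext v w
  rw [distLapMatrix, Matrix.sub_apply, distMatrix]
  by_cases hvw : v = w
  · subst hvw
    rw [Matrix.diagonal_apply_eq, transmission hm hk v, Matrix.of_apply,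
      dist_eq hm hk v v, if_pos rfl]
    simp only [Nat.cast_zero, sub_zero]
    simp [Mm, Mval, sr]
  · rw [Matrix.diagonal_apply_ne _ hvw, Matrix.of_apply, dist_eq hm hk v w, if_neg hvw]
    rw [sigma_eq_iff] at hvw
    by_cases hp : v.1 = w.1
    · have hc : ¬((v.2 : ℕ) = (w.2 : ℕ)) := fun h => hvw ⟨hp, h⟩
      simp only [Mm, Mval, if_pos hp, if_neg hc]
      norm_num
    · simp only [Mm, Mval, if_neg hp]
      norm_num

lemma MP_eq {m k : ℕ} (hm : 2 ≤ m) (hk : 1 ≤ k) :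
    Mm m k * Pm m k = Pm m k * Matrix.diagonal (evv m k) := by
  ext v w
  rw [Matrix.mul_apply, Matrix.mul_diagonal]
  have hrow : ∀ u : V m k, Mm m k v u = -1 - (if u.1 = v.1 then (1:ℝ) else 0)
      + (if u = v then Nr m k + sr m v.1 else 0) := by
    intro u
    show Mval m k v.1 (v.2 : ℕ) u.1 (u.2 : ℕ) = _
    simp only [Mval]
    rw [show (if v.1 = (0 : Fin (k+1)) then (m:ℝ) else 2) = sr m v.1 from rfl]
    by_cases h1 : v.1 = u.1
    · by_cases h2 : (v.2 : ℕ) = (u.2 : ℕ)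
      · have hc : u = v := (sigma_eq_iff u v).mpr ⟨h1.symm, h2.symm⟩
        rw [if_pos h1, if_pos h2, if_pos h1.symm, if_pos hc]; ring
      · have hc : ¬u = v := fun h => h2 (((sigma_eq_iff u v).mp h).2.symm)
        rw [if_pos h1, if_neg h2, if_pos h1.symm, if_neg hc]; ring
    · have hc : ¬u = v := fun h => h1 (((sigma_eq_iff u v).mp h).1.symm)
      rw [if_neg h1, if_neg (fun hc2 : u.1 = v.1 => h1 hc2.symm), if_neg hc]; ring
  have hsplit : ∑ u, Mm m k v u * Pm m k u w
      = -(∑ u, Pm m k u w) - (∑ u, (if u.1 = v.1 then (1:ℝ) else 0) * Pm m k u w)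
        + ∑ u, (if u = v then Nr m k + sr m v.1 else 0) * Pm m k u w := by
    rw [← Finset.sum_neg_distrib, ← Finset.sum_sub_distrib, ← Finset.sum_add_distrib]
    refine Finset.sum_congr rfl (fun u _ => ?_)
    rw [hrow u]; ring
  rw [hsplit, Pcol_total hm hk w,
    sum_partFun v.1 (fun _ => (1:ℝ)) (fun u => Pm m k u w),
    sum_point v (Nr m k + sr m v.1) (fun u => Pm m k u w)]
  have hpart : ∑ e : Fin (if v.1 = 0 then m else 2), 1 * Pm m k ⟨v.1, e⟩ w
      = ∑ e : Fin (if v.1 = 0 then m else 2), Pm m k ⟨v.1, e⟩ w :=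
    Finset.sum_congr rfl (fun e _ => one_mul _)
  rw [hpart, Pcol_part hm hk v.1 w]
  obtain ⟨p, c⟩ := v
  obtain ⟨q, d⟩ := w
  dsimp only
  by_cases hq : q = 0
  · subst hq
    by_cases hd0 : (d : ℕ) = 0
    · simp [Pm, Pval, evv, hd0]
    · simp only [Pm, Pval, evv, hd0, if_false, if_neg hd0, eq_self_iff_true, if_true, and_false]
      by_cases hp : p = 0
      · simp only [hp, eq_self_iff_true, if_true, sr]
        ring
      · simp only [if_neg hp, sr]
        ring
  · by_cases hd0 : (d : ℕ) = 0
    · simp only [Pm, Pval, evv, hd0, eq_self_iff_true, if_true, if_neg hq, hq, false_and, if_false, and_true]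
      by_cases hpq : p = q
      · have hp : ¬(p = 0) := fun h => hq (hpq ▸ h)
        simp only [if_pos hpq, if_neg hp, sr]
        ring
      · simp only [if_neg hpq]
        by_cases hp : p = 0
        · simp only [if_pos hp, sr]
          ring
        · simp only [if_neg hp, sr]
          ring
    · simp only [Pm, Pval, evv, hd0, if_neg hq, if_neg hd0, hq, false_and, if_false, and_false]
      by_cases hpq : p = q
      · have hp : ¬(p = 0) := fun h => hq (hpq ▸ h)
        simp only [if_pos hpq, if_neg hp, sr]
        by_cases hc0 : (c : ℕ) = 0
        · simp only [if_pos hc0]; ring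
        · simp only [if_neg hc0]; ring
      · simp only [if_neg hpq]
        ring

lemma CP_eq {m k : ℕ} (hm : 2 ≤ m) (hk : 1 ≤ k) :
    Cm m k * Pm m k = Matrix.diagonal (ddv m k) := by
  ext w v
  rw [Matrix.mul_apply, Matrix.diagonal_apply]
  obtain ⟨q, d⟩ := w
  obtain ⟨p, c⟩ := v
  have hR : (if (⟨q, d⟩ : V m k) = ⟨p, c⟩ then ddv m k ⟨q, d⟩ else 0)
      = (if q = p ∧ (d : ℕ) = (c : ℕ) then ddv m k ⟨q, d⟩ else 0) := by
    by_cases h : (⟨q, d⟩ : V m k) = ⟨p, c⟩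
    · rw [if_pos h, if_pos ((sigma_eq_iff _ _).mp h)]
    · rw [if_neg h, if_neg (fun hc => h ((sigma_eq_iff _ _).mpr hc))]
  rw [hR]
  by_cases hq : q = 0
  · subst hq
    by_cases hd0 : (d : ℕ) = 0
    · have hone : ∀ u : V m k, Cm m k ⟨0, d⟩ u * Pm m k u ⟨p, c⟩ = Pm m k u ⟨p, c⟩ := by
        intro u
        rw [show Cm m k ⟨0, d⟩ u = 1 from by simp [Cm, Cval, hd0], one_mul]
      rw [Finset.sum_congr rfl (fun u _ => hone u), Pcol_total hm hk ⟨p, c⟩]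
      dsimp only
      by_cases hp : p = 0
      · by_cases hc0 : (c : ℕ) = 0
        · rw [if_pos ⟨hp, hc0⟩, if_pos ⟨hp.symm, by omega⟩]
          simp [ddv, hd0]
        · rw [if_neg (by tauto), if_neg (fun h => hc0 (by omega))]
      · rw [if_neg (by tauto), if_neg (fun h => hp h.1.symm)]
    · have hrow : ∀ u : V m k, Cm m k ⟨0, d⟩ u
          = (if u.1 = 0 then (1:ℝ) else 0) - (if u = (⟨0, d⟩ : V m k) then (m:ℝ) else 0) := by
        intro u
        show Cval m k 0 (d : ℕ) u.1 (u.2 : ℕ) = _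
        simp only [Cval, eq_self_iff_true, if_true, if_neg hd0]
        by_cases h1 : u.1 = 0
        · by_cases h2 : (u.2 : ℕ) = (d : ℕ)
          · rw [if_pos h1, if_pos h2, if_pos h1, if_pos ((sigma_eq_iff _ _).mpr ⟨h1, h2⟩)]
          · rw [if_pos h1, if_neg h2, if_pos h1,
              if_neg (fun hc => h2 ((sigma_eq_iff _ _).mp hc).2)]
            ring
        · rw [if_neg h1, if_neg h1, if_neg (fun hc => h1 ((sigma_eq_iff _ _).mp hc).1)]
          ring
      have hsplit : ∑ u, Cm m k ⟨0, d⟩ u * Pm m k u ⟨p, c⟩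
          = (∑ u, (if u.1 = (0 : Fin (k+1)) then (1:ℝ) else 0) * Pm m k u ⟨p, c⟩)
            - ∑ u, (if u = (⟨0, d⟩ : V m k) then (m:ℝ) else 0) * Pm m k u ⟨p, c⟩ := by
        rw [← Finset.sum_sub_distrib]
        refine Finset.sum_congr rfl (fun u _ => ?_)
        rw [hrow u]; ring
      rw [hsplit, sum_partFun 0 (fun _ => (1:ℝ)) (fun u => Pm m k u ⟨p, c⟩),
        sum_point (⟨0, d⟩ : V m k) (m : ℝ) (fun u => Pm m k u ⟨p, c⟩)]
      have hpart : ∑ e : Fin (if (0 : Fin (k+1)) = 0 then m else 2),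
            1 * Pm m k ⟨0, e⟩ (⟨p, c⟩ : V m k)
          = ∑ e : Fin (if (0 : Fin (k+1)) = 0 then m else 2), Pm m k ⟨0, e⟩ (⟨p, c⟩ : V m k) :=
        Finset.sum_congr rfl (fun e _ => one_mul _)
      rw [hpart, Pcol_part hm hk 0 ⟨p, c⟩]
      dsimp only
      by_cases hp : p = 0
      · subst hp
        simp only [eq_self_iff_true, if_true, true_and]
        by_cases hc0 : (c : ℕ) = 0
        · rw [if_pos hc0, if_neg (show ¬(d : ℕ) = (c : ℕ) by omega)]
          simp only [Pm, Pval, eq_self_iff_true, if_true, hc0, sr]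
          ring
        · rw [if_neg hc0]
          simp only [Pm, Pval, eq_self_iff_true, if_true, if_neg hc0, if_neg hd0, ddv]
          by_cases hdc : (d : ℕ) = (c : ℕ)
          · rw [if_pos hdc, if_pos hdc]
            ring
          · rw [if_neg hdc, if_neg hdc]
            ring
      · have h0p : ¬((0 : Fin (k+1)) = p) := fun h => hp h.symm
        rw [if_neg (show ¬((0:Fin (k+1)) = p ∧ (d:ℕ) = (c:ℕ)) from fun h => hp h.1.symm)]
        by_cases hc0 : (c : ℕ) = 0
        · rw [if_pos hc0, if_neg hp, if_neg h0p]
          simp only [eq_self_iff_true, if_true]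
          simp only [Pm, Pval, if_neg hp, if_neg h0p, hc0, eq_self_iff_true, if_true]
          ring
        · rw [if_neg hc0]
          simp only [Pm, Pval, if_neg hp, if_neg h0p, if_neg hc0]
          ring
  · by_cases hd0 : (d : ℕ) = 0
    · have hrow : ∀ u : V m k, Cm m k ⟨q, d⟩ u
          = -2 + (if u.1 = q then Nr m k else 0) := by
        intro u
        show Cval m k q (d : ℕ) u.1 (u.2 : ℕ) = _
        simp only [Cval, if_neg hq, hd0, eq_self_iff_true, if_true]
        by_cases h1 : u.1 = q
        · rw [if_pos h1, if_pos h1]; ring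
        · rw [if_neg h1, if_neg h1]; ring
      have hsplit : ∑ u, Cm m k ⟨q, d⟩ u * Pm m k u ⟨p, c⟩
          = -2 * (∑ u, Pm m k u ⟨p, c⟩)
            + Nr m k * ∑ u, (if u.1 = q then (1:ℝ) else 0) * Pm m k u ⟨p, c⟩ := by
        rw [Finset.mul_sum, Finset.mul_sum, ← Finset.sum_add_distrib]
        refine Finset.sum_congr rfl (fun u _ => ?_)
        rw [hrow u]
        by_cases h1 : u.1 = q
        · rw [if_pos h1, if_pos h1]; ring
        · rw [if_neg h1, if_neg h1]; ring
      rw [hsplit, Pcol_total hm hk ⟨p, c⟩,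
        sum_partFun q (fun _ => (1:ℝ)) (fun u => Pm m k u ⟨p, c⟩)]
      have hpart : ∑ e : Fin (if q = 0 then m else 2), 1 * Pm m k ⟨q, e⟩ (⟨p, c⟩ : V m k)
          = ∑ e : Fin (if q = 0 then m else 2), Pm m k ⟨q, e⟩ (⟨p, c⟩ : V m k) :=
        Finset.sum_congr rfl (fun e _ => one_mul _)
      rw [hpart, Pcol_part hm hk q ⟨p, c⟩]
      dsimp only
      by_cases hc0 : (c : ℕ) = 0
      · rw [if_pos hc0]
        by_cases hp : p = 0
        · subst hp
          rw [if_pos (⟨rfl, hc0⟩ : (0 : Fin (k+1)) = 0 ∧ (c : ℕ) = 0)]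
          simp only [eq_self_iff_true, if_true]
          rw [if_neg (fun h : q = 0 ∧ (d:ℕ) = (c:ℕ) => hq h.1), sr, if_neg hq]
          ring
        · rw [if_neg (fun h : p = 0 ∧ (c:ℕ) = 0 => hp h.1), if_neg hp]
          by_cases hqp : q = p
          · rw [if_pos hqp, if_pos ⟨hqp, by omega⟩]
            simp only [ddv, if_neg hq, hd0, eq_self_iff_true, if_true]
            ring
          · rw [if_neg hqp, if_neg hq, if_neg (fun h : q = p ∧ (d:ℕ) = (c:ℕ) => hqp h.1)]
            ring
      · rw [if_neg (fun h : p = 0 ∧ (c:ℕ) = 0 => hc0 h.2), if_neg hc0,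
          if_neg (fun h : q = p ∧ (d:ℕ) = (c:ℕ) => hc0 (by omega))]
        ring
    · have hd1 : (d : ℕ) = 1 := by
        have h2 : (d : ℕ) < 2 := lt_of_lt_of_eq d.isLt (if_neg hq)
        omega
      have hrow : ∀ u : V m k, Cm m k ⟨q, d⟩ u
          = (if u.1 = q then (if (u.2 : ℕ) = 0 then (1:ℝ) else -1) else 0) := by
        intro u
        show Cval m k q (d : ℕ) u.1 (u.2 : ℕ) = _
        simp only [Cval, if_neg hq, if_neg hd0]
      rw [Finset.sum_congr rfl (fun u _ => by rw [hrow u]),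
        sum_partFun q (fun t => if t = 0 then (1:ℝ) else -1) (fun u => Pm m k u ⟨p, c⟩)]
      have hconv : ∑ e : Fin (if q = 0 then m else 2),
            (if (e : ℕ) = 0 then (1:ℝ) else -1) * Pm m k ⟨q, e⟩ (⟨p, c⟩ : V m k)
          = ∑ t ∈ Finset.range (if q = 0 then m else 2),
            (if t = 0 then (1:ℝ) else -1) * Pval m q t p (c : ℕ) :=
        Fin.sum_univ_eq_sum_range
          (fun t => (if t = 0 then (1:ℝ) else -1) * Pval m q t p (c : ℕ)) _
      rw [hconv]
      conv_lhs => rw [show (if q = 0 then m else 2) = 2 from if_neg hq]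
      rw [Finset.sum_range_succ, Finset.sum_range_one]
      norm_num
      by_cases hp : p = 0
      · rw [if_neg (fun h : q = p ∧ (d:ℕ) = (c:ℕ) => hq (h.1.trans hp))]
        simp only [Pval, if_pos hp, hp, eq_self_iff_true, if_true]
        by_cases hc0 : (c : ℕ) = 0
        · simp [hc0, hq]
        · simp [hc0, hq]
      · by_cases hqp : q = p
        · by_cases hc0 : (c : ℕ) = 0
          · rw [if_neg (show ¬(q = p ∧ (d:ℕ) = (c:ℕ)) from fun h => by omega)]
            simp only [Pval, if_neg hp, hc0, eq_self_iff_true, if_true, if_pos hqp]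
            ring
          · have hc1 : (c : ℕ) = 1 := by
              have h2 : (c : ℕ) < 2 := lt_of_lt_of_eq c.isLt (if_neg hp)
              omega
            rw [if_pos (show q = p ∧ (d:ℕ) = (c:ℕ) from ⟨hqp, by omega⟩)]
            simp only [Pval, if_neg hp, if_neg hc0, if_pos hqp, ddv, if_neg hq, if_neg hd0]
            norm_num
        · rw [if_neg (fun h : q = p ∧ (d:ℕ) = (c:ℕ) => hqp h.1)]
          simp only [Pval, if_neg hp, if_neg hqp]
          by_cases hc0 : (c : ℕ) = 0
          · simp [hc0, if_neg hq]
          · simp [hc0]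

lemma Pm_isUnit {m k : ℕ} (hm : 2 ≤ m) (hk : 1 ≤ k) : IsUnit (Pm m k).det := by
  have hdet : (Cm m k).det * (Pm m k).det = ∏ w, ddv m k w := by
    rw [← Matrix.det_mul, CP_eq hm hk, Matrix.det_diagonal]
  have hmpos : (0:ℝ) < (m : ℝ) := by
    have : (0:ℕ) < m := by omega
    exact_mod_cast this
  have hNpos : (0:ℝ) < Nr m k := by
    rw [Nr]
    have : (0:ℝ) ≤ 2 * (k:ℝ) := by positivity
    linarith
  have hne : (∏ w, ddv m k w) ≠ 0 := by
    apply Finset.prod_ne_zero_iff.mpr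
    intro w _
    unfold ddv
    split_ifs <;> positivity
  rw [isUnit_iff_ne_zero]
  intro h
  rw [h, mul_zero] at hdet
  exact hne hdet.symm

lemma charpoly_conj {n : Type*} [Fintype n] [DecidableEq n] (P A : Matrix n n ℝ)
    (h : IsUnit P.det) : (P * A * P⁻¹).charpoly = A.charpoly := by
  have hmap : (P.map (Polynomial.C : ℝ →+* ℝ[X])) * ((P⁻¹).map Polynomial.C) = 1 := by
    rw [← Matrix.map_mul, Matrix.mul_nonsing_inv _ h]
    simp
  have key : (P * A * P⁻¹).charmatrix
      = P.map Polynomial.C * A.charmatrix * (P⁻¹).map Polynomial.C := by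
    unfold Matrix.charmatrix
    simp only [RingHom.mapMatrix_apply]
    rw [Matrix.map_mul, Matrix.map_mul, mul_sub, sub_mul]
    congr 1
    · rw [Matrix.mul_assoc,
        (Matrix.scalar_commute (X : ℝ[X]) (fun r => Commute.all _ _) _).eq, ← Matrix.mul_assoc,
        hmap, one_mul]
  unfold Matrix.charpoly
  rw [key, Matrix.det_mul, Matrix.det_mul]
  have hd : (P.map (Polynomial.C : ℝ →+* ℝ[X])).det * ((P⁻¹).map Polynomial.C).det = 1 := by
    rw [← Matrix.det_mul, hmap, Matrix.det_one]
  calc (P.map Polynomial.C).det * A.charmatrix.det * ((P⁻¹).map Polynomial.C).det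
      = A.charmatrix.det * ((P.map Polynomial.C).det * ((P⁻¹).map Polynomial.C).det) := by ring
    _ = A.charmatrix.det := by rw [hd, mul_one]

lemma charpoly_diag {n : Type*} [Fintype n] [DecidableEq n] (d : n → ℝ) :
    (Matrix.diagonal d).charpoly = ∏ i, (X - C (d i)) := by
  unfold Matrix.charpoly
  have key : (Matrix.diagonal d).charmatrix = Matrix.diagonal (fun i => X - C (d i)) := by
    ext i j
    by_cases h : i = j
    · subst h
      rw [Matrix.charmatrix_apply_eq, Matrix.diagonal_apply_eq, Matrix.diagonal_apply_eq]
    · rw [Matrix.charmatrix_apply_ne _ _ _ h, Matrix.diagonal_apply_ne _ h,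
        Matrix.diagonal_apply_ne _ h]
      simp
  rw [key, Matrix.det_diagonal]

lemma prod_ev {m k : ℕ} (hm : 2 ≤ m) (hk : 1 ≤ k) :
    ∏ w : V m k, (X - C (evv m k w))
      = X * (X - C (Nr m k)) ^ k * (X - C (Nr m k + 2)) ^ k
          * (X - C (Nr m k + m)) ^ (m - 1) := by
  rw [← Finset.univ_sigma_univ, Finset.prod_sigma, Fin.prod_univ_succ]
  have h0 : ∏ e : Fin (if (0 : Fin (k+1)) = 0 then m else 2), (X - C (evv m k ⟨0, e⟩))
      = X * (X - C (Nr m k + m)) ^ (m - 1) := by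
    have hc : ∀ e : Fin (if (0 : Fin (k+1)) = 0 then m else 2),
        X - C (evv m k ⟨0, e⟩)
          = (fun t => X - C (if t = 0 then 0 else Nr m k + m)) (e : ℕ) := by
      intro e
      simp [evv]
    rw [Finset.prod_congr rfl (fun e _ => hc e),
      Fin.prod_univ_eq_prod_range (fun t => X - C (if t = 0 then 0 else Nr m k + m)) _]
    rw [show (if (0 : Fin (k+1)) = 0 then m else 2) = m from if_pos rfl]
    obtain ⟨m', rfl⟩ : ∃ m', m = m' + 1 := ⟨m - 1, by omega⟩
    rw [Finset.prod_range_succ']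
    have hstep : ∀ t ∈ Finset.range m',
        (X - C (if t + 1 = 0 then 0 else Nr (m'+1) k + ((m'+1 : ℕ) : ℝ)))
        = X - C (Nr (m'+1) k + ((m'+1 : ℕ) : ℝ)) := by
      intro t _
      norm_num
    rw [Finset.prod_congr rfl hstep, Finset.prod_const, Finset.card_range]
    simp [mul_comm]
  have h1 : ∀ i : Fin k,
      ∏ e : Fin (if (i.succ : Fin (k+1)) = 0 then m else 2), (X - C (evv m k ⟨i.succ, e⟩))
        = (X - C (Nr m k)) * (X - C (Nr m k + 2)) := by
    intro i
    have hc : ∀ e : Fin (if (i.succ : Fin (k+1)) = 0 then m else 2),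
        X - C (evv m k ⟨i.succ, e⟩)
          = (fun t => X - C (if t = 0 then Nr m k else Nr m k + 2)) (e : ℕ) := by
      intro e
      simp [evv, Fin.succ_ne_zero i]
    rw [Finset.prod_congr rfl (fun e _ => hc e),
      Fin.prod_univ_eq_prod_range (fun t => X - C (if t = 0 then Nr m k else Nr m k + 2)) _]
    rw [show (if (i.succ : Fin (k+1)) = 0 then m else 2) = 2 from if_neg (Fin.succ_ne_zero i)]
    rw [Finset.prod_range_succ, Finset.prod_range_one]
    norm_num
  rw [h0, Finset.prod_congr rfl (fun i _ => h1 i), Finset.prod_const, Finset.card_univ,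
    Fintype.card_fin, mul_pow]
  ring

theorem general (m k : ℕ) (hm : 2 ≤ m) (hk : 1 ≤ k) :
    (distLapMatrix (G m k)).charpoly
      = X * (X - C (Nr m k)) ^ k * (X - C (Nr m k + 2)) ^ k
          * (X - C (Nr m k + m)) ^ (m - 1) := by
  rw [lap_eq hm hk]
  have hu := Pm_isUnit hm hk
  have hM : Mm m k = Pm m k * Matrix.diagonal (evv m k) * (Pm m k)⁻¹ := by
    rw [← MP_eq hm hk, Matrix.mul_nonsing_inv_cancel_right _ _ hu]
  rw [hM, charpoly_conj _ _ hu, charpoly_diag, prod_ev hm hk]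

end QDP

/-- For `n ≥ 4`, the distance Laplacian spectrum of the non-commuting graph of `QD_{2^n}`,
i.e. of `K_{2^(n-1)-2,2,…,2}` with `2^(n-2)` parts of size `2`, consists of `0` with
multiplicity `1`, `2^n-2` and `2^n` each with multiplicity `2^(n-2)`, and `2^n+2^(n-1)-4`
with multiplicity `2^(n-1)-3`; in particular the graph is distance Laplacian integral. -/
theorem distLaplacian_spectrum_quasidihedral (n : ℕ) (hn : 4 ≤ n) :
    (distLapMatrix (SimpleGraph.completeMultipartiteGraph
        fun i : Fin (2 ^ (n - 2) + 1) => Fin (if i = 0 then 2 ^ (n - 1) - 2 else 2))).charpoly =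
      X * (X - C ((2 : ℝ) ^ n - 2)) ^ (2 ^ (n - 2)) * (X - C ((2 : ℝ) ^ n)) ^ (2 ^ (n - 2)) *
        (X - C ((2 : ℝ) ^ n + (2 : ℝ) ^ (n - 1) - 4)) ^ (2 ^ (n - 1) - 3) ∧
    ∀ μ ∈ (distLapMatrix (SimpleGraph.completeMultipartiteGraph
        fun i : Fin (2 ^ (n - 2) + 1) =>
          Fin (if i = 0 then 2 ^ (n - 1) - 2 else 2))).charpoly.roots,
      ∃ z : ℤ, μ = (z : ℝ) := by
  have h4 : (4:ℕ) ≤ 2 ^ (n - 1) := by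
    calc (4:ℕ) = 2 ^ 2 := rfl
    _ ≤ 2 ^ (n - 1) := Nat.pow_le_pow_right (by norm_num) (by omega)
  have h8 : (8:ℕ) ≤ 2 ^ (n - 1) := by
    calc (8:ℕ) = 2 ^ 3 := rfl
    _ ≤ 2 ^ (n - 1) := Nat.pow_le_pow_right (by norm_num) (by omega)
  have hm : 2 ≤ 2 ^ (n - 1) - 2 := by omega
  have hk : 1 ≤ 2 ^ (n - 2) := Nat.one_le_two_pow
  have hgen' : (distLapMatrix (SimpleGraph.completeMultipartiteGraph
        fun i : Fin (2 ^ (n - 2) + 1) => Fin (if i = 0 then 2 ^ (n - 1) - 2 else 2))).charpoly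
      = X * (X - C (QDP.Nr (2 ^ (n - 1) - 2) (2 ^ (n - 2)))) ^ (2 ^ (n - 2))
          * (X - C (QDP.Nr (2 ^ (n - 1) - 2) (2 ^ (n - 2)) + 2)) ^ (2 ^ (n - 2))
          * (X - C (QDP.Nr (2 ^ (n - 1) - 2) (2 ^ (n - 2)) + ((2 ^ (n - 1) - 2 : ℕ) : ℝ)))
              ^ (2 ^ (n - 1) - 2 - 1) :=
    QDP.general (2 ^ (n - 1) - 2) (2 ^ (n - 2)) hm hk
  have hcast : ((2 ^ (n - 1) - 2 : ℕ) : ℝ) = (2:ℝ) ^ (n-1) - 2 := by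
    rw [Nat.cast_sub (by omega)]
    push_cast
    ring
  have hpow1 : (2:ℝ) ^ (n - 1) = 2 * (2:ℝ) ^ (n - 2) := by
    have h : n - 1 = (n - 2) + 1 := by omega
    rw [h, pow_succ]
    ring
  have hpow0 : (2:ℝ) ^ n = 4 * (2:ℝ) ^ (n - 2) := by
    have h : n = (n - 2) + 2 := by omega
    conv_lhs => rw [h]
    rw [pow_add]
    ring
  have hA : QDP.Nr (2 ^ (n - 1) - 2) (2 ^ (n - 2)) = (2:ℝ)^n - 2 := by
    rw [QDP.Nr, hcast]
    push_cast
    rw [hpow1, hpow0]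
    ring
  have hB : QDP.Nr (2 ^ (n - 1) - 2) (2 ^ (n - 2)) + 2 = (2:ℝ)^n := by
    rw [hA]; ring
  have hC : QDP.Nr (2 ^ (n - 1) - 2) (2 ^ (n - 2)) + ((2 ^ (n - 1) - 2 : ℕ) : ℝ)
      = (2:ℝ)^n + (2:ℝ)^(n-1) - 4 := by
    rw [hA, hcast]; ring
  have hexp : 2 ^ (n - 1) - 2 - 1 = 2 ^ (n - 1) - 3 := by omega
  have hfinal : (distLapMatrix (SimpleGraph.completeMultipartiteGraph
        fun i : Fin (2 ^ (n - 2) + 1) => Fin (if i = 0 then 2 ^ (n - 1) - 2 else 2))).charpoly =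
      X * (X - C ((2 : ℝ) ^ n - 2)) ^ (2 ^ (n - 2)) * (X - C ((2 : ℝ) ^ n)) ^ (2 ^ (n - 2)) *
        (X - C ((2 : ℝ) ^ n + (2 : ℝ) ^ (n - 1) - 4)) ^ (2 ^ (n - 1) - 3) := by
    rw [hgen', hB, hC, hA, hexp]
  refine ⟨hfinal, ?_⟩
  intro μ hμ
  rw [hfinal] at hμ
  have hroot := (Polynomial.mem_roots'.mp hμ).2
  have h0 : μ * (μ - ((2:ℝ)^n - 2)) ^ (2 ^ (n - 2)) * (μ - (2:ℝ)^n) ^ (2 ^ (n - 2))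
      * (μ - ((2:ℝ)^n + (2:ℝ)^(n-1) - 4)) ^ (2 ^ (n - 1) - 3) = 0 := by
    simpa using hroot
  have hk2 : (2 : ℕ) ^ (n - 2) ≠ 0 := by positivity
  have hk3 : (2 : ℕ) ^ (n - 1) - 3 ≠ 0 := by omega
  rcases mul_eq_zero.mp h0 with h1 | h1
  · rcases mul_eq_zero.mp h1 with h2 | h2
    · rcases mul_eq_zero.mp h2 with h3 | h3
      · exact ⟨0, by simpa using h3⟩
      · have h4' : μ = (2:ℝ)^n - 2 := by
          have := pow_eq_zero_iff hk2 |>.mp h3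
          linarith [this]
        exact ⟨2 ^ n - 2, by rw [h4']; push_cast; ring⟩
    · have h4' : μ = (2:ℝ)^n := by
        have := pow_eq_zero_iff hk2 |>.mp h2
        linarith [this]
      exact ⟨2 ^ n, by rw [h4']; push_cast; ring⟩
  · have h4' : μ = (2:ℝ)^n + (2:ℝ)^(n-1) - 4 := by
      have := pow_eq_zero_iff hk3 |>.mp h1
      linarith [this]
    exact ⟨2 ^ n + 2 ^ (n - 1) - 4, by
      rw [h4']
      push_cast [Nat.one_le_two_pow]
      ring⟩
end

section
/- The distance Laplacian spectrum of $K_{2n,n,n,n}$ (the non-commuting graph of $U_{6n}$) consists of $0$ with multiplicity $1$, $5n$ with multiplicity $3$, $6n$ with multiplicity $3(n-1)$, and $7n$ with multiplicity $2n-1$. In particular, this graph is distance Laplacian integral for all $n$. -/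
open Polynomial

namespace U6nAux
open Matrix

section conj
variable {m : Type*} [Fintype m] [DecidableEq m] {R : Type*} [CommRing R]

lemma charpoly_conj (P Q A : Matrix m m R) (hQP : Q * P = 1) :
    (P * A * Q).charpoly = A.charpoly := by
  have hPQ : P * Q = 1 := mul_eq_one_comm.mp hQP
  have hmap : (P.map C) * (Q.map C) = (1 : Matrix m m R[X]) := by
    rw [← Matrix.map_mul, hPQ, Matrix.map_one C C_0 C_1]
  have hmap' : (Q.map C) * (P.map C) = (1 : Matrix m m R[X]) := by
    rw [← Matrix.map_mul, hQP, Matrix.map_one C C_0 C_1]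
  have hc : charmatrix (P * A * Q) = (P.map C) * charmatrix A * (Q.map C) := by
    unfold charmatrix
    rw [RingHom.mapMatrix_apply, RingHom.mapMatrix_apply, Matrix.map_mul, Matrix.map_mul]
    rw [Matrix.mul_sub, Matrix.sub_mul]
    congr 1
    rw [show P.map C * scalar m (X : R[X]) * Q.map C
        = scalar m (X : R[X]) * (P.map C * Q.map C) from by
      rw [← (scalar_commute (X : R[X]) (Commute.all X) (P.map C)).eq, Matrix.mul_assoc],
      hmap, Matrix.mul_one]
  rw [Matrix.charpoly, hc, det_mul, det_mul, Matrix.charpoly]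
  have h2 : (P.map C).det * (charmatrix A).det * (Q.map C).det
      = ((P.map C).det * (Q.map C).det) * (charmatrix A).det := by ring
  rw [h2, ← det_mul, hmap, det_one, one_mul]

lemma charpoly_diagonal (d : m → R) :
    (Matrix.diagonal d).charpoly = ∏ i : m, (X - C (d i)) := by
  have h : charmatrix (Matrix.diagonal d) = Matrix.diagonal fun i => (X : R[X]) - C (d i) := by
    ext i j
    rcases eq_or_ne i j with rfl | hij
    · rw [charmatrix_apply_eq, diagonal_apply_eq, diagonal_apply_eq]
    · rw [charmatrix_apply_ne _ _ _ hij, diagonal_apply_ne _ hij, diagonal_apply_ne _ hij,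
        map_zero, neg_zero]
  rw [Matrix.charpoly, h, det_diagonal]

end conj

variable (n : ℕ)

abbrev Vt := (i : Fin 4) × Fin (if i = 0 then 2 * n else n)
abbrev sz (i : Fin 4) : ℕ := if i = 0 then 2 * n else n

noncomputable def Gr : SimpleGraph (Vt n) :=
  SimpleGraph.completeMultipartiteGraph fun i : Fin 4 => Fin (if i = 0 then 2 * n else n)

lemma sz_pos (hn : 1 ≤ n) (i : Fin 4) : 0 < sz n i := by
  unfold sz; split <;> omega

lemma adj_iff (u v : Vt n) : (Gr n).Adj u v ↔ u.1 ≠ v.1 := by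
  simp [Gr]

lemma dist_eq (hn : 1 ≤ n) (u v : Vt n) :
    (Gr n).dist u v = if u = v then 0 else if u.1 = v.1 then 2 else 1 := by
  rcases eq_or_ne u v with rfl | huv
  · simp
  · rw [if_neg huv]
    rcases eq_or_ne u.1 v.1 with h1 | h1
    · rw [if_pos h1]
      set k : Fin 4 := if u.1 = 0 then 1 else 0 with hk
      have hku : k ≠ u.1 := by
        rcases eq_or_ne u.1 0 with h | h <;> simp [hk, h]
        · exact h ∘ Eq.symm
      have hpos : 0 < (if k = 0 then 2 * n else n) := by split <;> omega
      set w : Vt n := ⟨k, ⟨0, hpos⟩⟩ with hw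
      have a1 : (Gr n).Adj u w := (adj_iff n u w).mpr (fun h => hku h.symm)
      have a2 : (Gr n).Adj w v := (adj_iff n w v).mpr (by rw [← h1]; exact hku)
      have hle : (Gr n).dist u v ≤ 2 := by
        simpa using SimpleGraph.dist_le (SimpleGraph.Walk.cons a1 a2.toWalk)
      have hreach : (Gr n).Reachable u v := (a1.reachable).trans a2.reachable
      have hpos' : 0 < (Gr n).dist u v := hreach.pos_dist_of_ne huv
      have hne1 : (Gr n).dist u v ≠ 1 := by
        intro h
        exact (adj_iff n u v).mp (SimpleGraph.dist_eq_one_iff_adj.mp h) h1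
      omega
    · rw [if_neg h1]
      exact SimpleGraph.dist_eq_one_iff_adj.mpr ((adj_iff n u v).mpr h1)

lemma sumV (f : Vt n → ℝ) :
    ∑ v : Vt n, f v = ∑ c : Fin 4, ∑ d : Fin (sz n c), f ⟨c, d⟩ := by
  rw [← Finset.univ_sigma_univ, Finset.sum_sigma]

lemma prodV (f : Vt n → ℝ[X]) :
    ∏ v : Vt n, f v = ∏ c : Fin 4, ∏ d : Fin (sz n c), f ⟨c, d⟩ := by
  rw [← Finset.univ_sigma_univ, Finset.prod_sigma]

lemma sum_ite_val {N : ℕ} (k : ℕ) (hk : k < N) (r : ℝ) :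
    ∑ d : Fin N, (if (d : ℕ) = k then r else 0) = r := by
  rw [Finset.sum_eq_single (⟨k, hk⟩ : Fin N)]
  · simp
  · intro d _ hd
    rw [if_neg]
    simpa [Fin.ext_iff] using hd
  · simp

lemma sum_sz : ∑ c : Fin 4, (sz n c : ℝ) = 5 * n := by
  rw [Fin.sum_univ_four]
  simp only [sz, if_pos rfl, if_neg (show (1:Fin 4) ≠ 0 by decide),
    if_neg (show (2:Fin 4) ≠ 0 by decide), if_neg (show (3:Fin 4) ≠ 0 by decide)]
  push_cast
  ring

lemma transmission (hn : 1 ≤ n) (u : Vt n) :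
    ∑ v : Vt n, ((Gr n).dist u v : ℝ) = 5 * n + (sz n u.1 : ℝ) - 2 := by
  have step : ∀ v : Vt n, ((Gr n).dist u v : ℝ) =
      (if u.1 = v.1 then 2 else 1) - (if v = u then 2 else 0) := by
    intro v
    rw [dist_eq n hn]
    rcases eq_or_ne u v with rfl | huv
    · simp
    · rw [if_neg huv, if_neg (Ne.symm huv)]
      split <;> norm_num
  simp_rw [step]
  rw [Finset.sum_sub_distrib]
  have h2 : ∑ v : Vt n, (if v = u then (2:ℝ) else 0) = 2 := by
    simp [Finset.sum_ite_eq']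
  have h1 : ∑ v : Vt n, (if u.1 = v.1 then (2:ℝ) else 1) = 5 * n + (sz n u.1 : ℝ) := by
    rw [sumV]
    have inner : ∀ c : Fin 4, ∑ d : Fin (sz n c), (if u.1 = c then (2:ℝ) else 1)
        = (sz n c : ℝ) + (if u.1 = c then (sz n c : ℝ) else 0) := by
      intro c
      rw [Finset.sum_const, Finset.card_univ, Fintype.card_fin, nsmul_eq_mul]
      split <;> ring
    simp_rw [inner]
    rw [Finset.sum_add_distrib, sum_sz, Finset.sum_ite_eq]
    simp
  rw [h1, h2]

lemma L_apply (hn : 1 ≤ n) (u v : Vt n) :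
    distLapMatrix (Gr n) u v =
      (5 * n + (sz n u.1 : ℝ)) * (if v = u then 1 else 0)
        - (if v.1 = u.1 then 1 else 0) - 1 := by
  rw [distLapMatrix, Matrix.sub_apply, Matrix.diagonal_apply, distMatrix, Matrix.of_apply,
    dist_eq n hn]
  rcases eq_or_ne u v with rfl | huv
  · rw [if_pos rfl, if_pos rfl, if_pos rfl, if_pos rfl, transmission n hn]
    push_cast
    ring
  · rw [if_neg huv, if_neg huv, if_neg (Ne.symm huv)]
    rcases eq_or_ne u.1 v.1 with h1 | h1
    · rw [if_pos h1, if_pos h1.symm]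
      push_cast
      ring
    · rw [if_neg h1, if_neg (Ne.symm h1)]
      push_cast
      ring

lemma rowsum (hn : 1 ≤ n) (u : Vt n) (f : Vt n → ℝ) :
    ∑ v, distLapMatrix (Gr n) u v * f v =
      (5 * n + (sz n u.1 : ℝ)) * f u - (∑ v, if v.1 = u.1 then f v else 0)
        - ∑ v, f v := by
  simp_rw [L_apply n hn, sub_mul, one_mul]
  rw [Finset.sum_sub_distrib, Finset.sum_sub_distrib]
  congr 1
  congr 1
  · have e : ∀ v : Vt n, ((5 * n + (sz n u.1 : ℝ)) * if v = u then 1 else 0) * f v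
        = if v = u then (5 * n + (sz n u.1 : ℝ)) * f v else 0 := by
      intro v
      split <;> ring
    simp_rw [e]
    simp [Finset.sum_ite_eq']
  · apply Finset.sum_congr rfl
    intro v _
    split <;> simp

/-- value of eigenvector column `(i,0)` on part `a`. -/
noncomputable def colval (a i : Fin 4) : ℝ :=
  if i = 0 then 1 else if a = i then 2 else if a = 0 then -1 else 0

noncomputable def Pm : Matrix (Vt n) (Vt n) ℝ :=
  Matrix.of fun u w =>
    if (w.2 : ℕ) = 0 then colval u.1 w.1
    else (if u.1 = w.1 ∧ (u.2 : ℕ) = (w.2 : ℕ) then 1 else 0)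
      - (if u.1 = w.1 ∧ (u.2 : ℕ) = 0 then 1 else 0)

noncomputable def Qm : Matrix (Vt n) (Vt n) ℝ :=
  Matrix.of fun u v =>
    if (u.2 : ℕ) = 0 then
      (if u.1 = 0 then 1 / (5 * (n : ℝ))
        else (if v.1 = u.1 then 1 / (2 * (n : ℝ)) else 0) - 1 / (10 * (n : ℝ)))
    else (if u.1 = v.1 ∧ (u.2 : ℕ) = (v.2 : ℕ) then 1 else 0)
      - (if v.1 = u.1 then 1 / (sz n u.1 : ℝ) else 0)

noncomputable def Dm : Vt n → ℝ := fun w =>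
  if (w.2 : ℕ) = 0 then (if w.1 = 0 then (0 : ℝ) else 5 * (n : ℝ))
  else (if w.1 = 0 then 7 * (n : ℝ) else 6 * (n : ℝ))

lemma mk_eq {i c : Fin 4} {j : Fin (sz n i)} {d : Fin (sz n c)} :
    (⟨i, j⟩ : Vt n) = ⟨c, d⟩ ↔ i = c ∧ (j : ℕ) = (d : ℕ) := by
  constructor
  · intro h
    obtain ⟨h1, h2⟩ := Sigma.mk.inj_iff.mp h
    subst h1
    exact ⟨rfl, congrArg Fin.val (eq_of_heq h2)⟩
  · rintro ⟨rfl, h⟩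
    exact congrArg (Sigma.mk i) (Fin.ext_iff.mpr h)

lemma sum_part_col (hn : 1 ≤ n) (a i : Fin 4) (j : Fin (sz n i)) :
    (∑ v : Vt n, if v.1 = a then Pm n v ⟨i, j⟩ else 0) =
      if (j : ℕ) = 0 then (sz n a : ℝ) * colval a i else 0 := by
  rw [sumV]
  have pull : ∀ c : Fin 4, (∑ d : Fin (sz n c), if (⟨c, d⟩ : Vt n).1 = a
      then Pm n ⟨c, d⟩ ⟨i, j⟩ else 0)
      = if c = a then ∑ d : Fin (sz n c), Pm n ⟨c, d⟩ ⟨i, j⟩ else 0 := by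
    intro c
    by_cases h : c = a
    · rw [if_pos h]; exact Finset.sum_congr rfl fun d _ => if_pos h
    · rw [if_neg h]; exact Finset.sum_eq_zero fun d _ => if_neg h
  simp_rw [pull]
  rw [Finset.sum_ite_eq']
  rw [if_pos (Finset.mem_univ a)]
  by_cases hj : (j : ℕ) = 0
  · rw [if_pos hj]
    have e : ∀ d : Fin (sz n a), Pm n ⟨a, d⟩ ⟨i, j⟩ = colval a i := by
      intro d
      simp [Pm, hj]
    simp_rw [e]
    rw [Finset.sum_const, Finset.card_univ, Fintype.card_fin, nsmul_eq_mul]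
  · rw [if_neg hj]
    have e : ∀ d : Fin (sz n a), Pm n ⟨a, d⟩ ⟨i, j⟩ =
        (if a = i ∧ (d : ℕ) = (j : ℕ) then 1 else 0)
          - (if a = i ∧ (d : ℕ) = 0 then 1 else 0) := by
      intro d
      simp [Pm, hj]
    simp_rw [e]
    rw [Finset.sum_sub_distrib]
    rcases eq_or_ne a i with rfl | hai
    · simp only [true_and]
      rw [sum_ite_val (j : ℕ) j.isLt, sum_ite_val 0 (sz_pos n hn a), sub_self]
    · simp [hai]

lemma sum_col (hn : 1 ≤ n) (i : Fin 4) (j : Fin (sz n i)) :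
    ∑ v : Vt n, Pm n v ⟨i, j⟩ =
      if (j : ℕ) = 0 then (if i = 0 then (5 * n : ℝ) else 0) else 0 := by
  have split4 : ∑ v : Vt n, Pm n v ⟨i, j⟩
      = ∑ a : Fin 4, ∑ v : Vt n, (if v.1 = a then Pm n v ⟨i, j⟩ else 0) := by
    rw [Finset.sum_comm]
    apply Finset.sum_congr rfl
    intro v _
    rw [Finset.sum_ite_eq, if_pos (Finset.mem_univ v.1)]
  rw [split4]
  simp_rw [sum_part_col n hn _ i j]
  by_cases hj : (j : ℕ) = 0
  · simp only [if_pos hj]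
    rcases eq_or_ne i 0 with rfl | hi
    · rw [if_pos rfl]
      have e : ∀ a : Fin 4, (sz n a : ℝ) * colval a 0 = (sz n a : ℝ) := by
        intro a
        simp [colval]
      simp_rw [e]
      exact sum_sz n
    · rw [if_neg hi]
      have e : ∀ a : Fin 4, (sz n a : ℝ) * colval a i =
          (if a = i then 2 * (sz n a : ℝ) else 0) + (if a = 0 then -(sz n a : ℝ) else 0) := by
        intro a
        rcases eq_or_ne a i with rfl | hai
        · rw [colval, if_neg hi, if_pos rfl, if_pos rfl, if_neg (by exact hi), add_zero]
          ring
        · rcases eq_or_ne a 0 with rfl | ha0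
          · rw [colval, if_neg hi, if_neg hai, if_pos rfl, if_neg hai, if_pos rfl]
            ring
          · rw [colval, if_neg hi, if_neg hai, if_neg ha0, if_neg hai, if_neg ha0]
            ring
      simp_rw [e]
      rw [Finset.sum_add_distrib, Finset.sum_ite_eq', Finset.sum_ite_eq',
        if_pos (Finset.mem_univ i), if_pos (Finset.mem_univ 0)]
      have h1 : sz n i = n := if_neg hi
      have h2 : sz n 0 = 2 * n := if_pos rfl
      rw [h1, h2]
      push_cast
      ring
  · simp [hj]

lemma LP_eq (hn : 1 ≤ n) :
    distLapMatrix (Gr n) * Pm n = Pm n * Matrix.diagonal (Dm n) := by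
  ext u w
  obtain ⟨a, b⟩ := u
  obtain ⟨i, j⟩ := w
  rw [Matrix.mul_apply, Matrix.mul_diagonal, rowsum n hn ⟨a, b⟩ (fun v => Pm n v ⟨i, j⟩)]
  dsimp only
  rw [sum_part_col n hn a i j, sum_col n hn i j]
  by_cases hj : (j : ℕ) = 0
  · have hP : Pm n ⟨a, b⟩ ⟨i, j⟩ = colval a i := by simp [Pm, hj]
    have hD : Dm n ⟨i, j⟩ = if i = 0 then (0 : ℝ) else 5 * (n : ℝ) := by simp [Dm, hj]
    rw [hP, hD, if_pos hj, if_pos hj]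
    rcases eq_or_ne i 0 with rfl | hi
    · rw [if_pos rfl, if_pos rfl]
      have : colval a 0 = 1 := by simp [colval]
      rw [this]
      ring
    · rw [if_neg hi, if_neg hi]
      ring
  · have hD : Dm n ⟨i, j⟩ = if i = 0 then 7 * (n : ℝ) else 6 * (n : ℝ) := by simp [Dm, hj]
    rw [hD, if_neg hj, if_neg hj]
    rcases eq_or_ne a i with rfl | hai
    · have hsz : (sz n a : ℝ) = if a = 0 then 2 * (n : ℝ) else (n : ℝ) := by
        unfold sz; split <;> push_cast <;> ring
      rw [hsz]
      rcases eq_or_ne a 0 with rfl | ha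
      · rw [if_pos rfl, if_pos rfl]
        ring
      · rw [if_neg ha, if_neg ha]
        ring
    · have hP : Pm n ⟨a, b⟩ ⟨i, j⟩ = 0 := by simp [Pm, hj, hai]
      rw [hP]
      ring

lemma QP_eq (hn : 1 ≤ n) : Qm n * Pm n = 1 := by
  have hnR : (0 : ℝ) < n := by exact_mod_cast hn
  ext u w
  obtain ⟨a, b⟩ := u
  obtain ⟨i, j⟩ := w
  have hone : (1 : Matrix (Vt n) (Vt n) ℝ) ⟨a, b⟩ ⟨i, j⟩
      = if a = i ∧ (b : ℕ) = (j : ℕ) then 1 else 0 := by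
    rw [Matrix.one_apply]
    by_cases h : (⟨a, b⟩ : Vt n) = ⟨i, j⟩
    · rw [if_pos h, if_pos ((mk_eq n).mp h)]
    · rw [if_neg h, if_neg (fun hc => h ((mk_eq n).mpr hc))]
  rw [Matrix.mul_apply, hone]
  by_cases hb : (b : ℕ) = 0
  · by_cases ha : a = 0
    · have e : ∀ v : Vt n, Qm n ⟨a, b⟩ v * Pm n v ⟨i, j⟩
          = (1 / (5 * (n : ℝ))) * Pm n v ⟨i, j⟩ := by
        intro v
        rw [Qm]
        dsimp only [Matrix.of_apply]
        rw [if_pos hb, if_pos ha]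
      simp_rw [e]
      rw [← Finset.mul_sum, sum_col n hn i j]
      by_cases hj : (j : ℕ) = 0
      · rw [if_pos hj]
        rcases eq_or_ne i 0 with rfl | hi
        · rw [if_pos rfl, if_pos ⟨ha, by rw [hb, hj]⟩]
          field_simp
        · rw [if_neg hi, if_neg (by rintro ⟨rfl, -⟩; exact hi ha), mul_zero]
      · rw [if_neg hj, if_neg (by rintro ⟨-, h⟩; rw [hb] at h; exact hj h.symm), mul_zero]
    · have e : ∀ v : Vt n, Qm n ⟨a, b⟩ v * Pm n v ⟨i, j⟩
          = (1 / (2 * (n : ℝ))) * (if v.1 = a then Pm n v ⟨i, j⟩ else 0)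
            - (1 / (10 * (n : ℝ))) * Pm n v ⟨i, j⟩ := by
        intro v
        rw [Qm]
        dsimp only [Matrix.of_apply]
        rw [if_pos hb, if_neg ha]
        split <;> ring
      simp_rw [e]
      rw [Finset.sum_sub_distrib, ← Finset.mul_sum, ← Finset.mul_sum,
        sum_part_col n hn a i j, sum_col n hn i j]
      by_cases hj : (j : ℕ) = 0
      · rw [if_pos hj, if_pos hj]
        have hsza : (sz n a : ℝ) = n := by rw [sz, if_neg ha]
        rcases eq_or_ne i 0 with rfl | hi
        · rw [if_pos rfl, if_neg (by rintro ⟨rfl, -⟩; exact ha rfl)]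
          have : colval a 0 = 1 := by simp [colval]
          rw [this, hsza]
          field_simp
          ring
        · rw [if_neg hi]
          have hc : colval a i = if a = i then 2 else 0 := by
            rw [colval, if_neg hi]
            rcases eq_or_ne a i with rfl | hai
            · rw [if_pos rfl, if_pos rfl]
            · rw [if_neg hai, if_neg hai, if_neg ha]
          rw [hc, hsza]
          rcases eq_or_ne a i with rfl | hai
          · rw [if_pos rfl, if_pos ⟨rfl, by rw [hb, hj]⟩]
            field_simp
            try ring
          · rw [if_neg hai, if_neg (by rintro ⟨h, -⟩; exact hai h)]
            ring
      · rw [if_neg hj, if_neg hj,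
          if_neg (by rintro ⟨-, h⟩; rw [hb] at h; exact hj h.symm)]
        ring
  · have e : ∀ v : Vt n, Qm n ⟨a, b⟩ v * Pm n v ⟨i, j⟩
        = (if v = ⟨a, b⟩ then Pm n v ⟨i, j⟩ else 0)
          - (1 / (sz n a : ℝ)) * (if v.1 = a then Pm n v ⟨i, j⟩ else 0) := by
      intro v
      obtain ⟨c, d⟩ := v
      rw [Qm]
      dsimp only [Matrix.of_apply]
      rw [if_neg hb]
      rcases eq_or_ne c a with rfl | hca
      · by_cases hdb : (d : ℕ) = (b : ℕ)
        · rw [if_pos rfl, if_pos ⟨rfl, hdb.symm⟩, if_pos ((mk_eq n).mpr ⟨rfl, hdb⟩),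
            if_pos rfl]
          ring
        · rw [if_pos rfl, if_neg (by rintro ⟨-, h⟩; exact hdb h.symm),
            if_neg (fun hc => hdb ((mk_eq n).mp hc).2), if_pos rfl]
          ring
      · rw [if_neg (by rintro ⟨h, -⟩; exact hca h.symm),
          if_neg (fun hc => hca ((mk_eq n).mp hc).1), if_neg hca, if_neg hca]
        ring
    simp_rw [e]
    rw [Finset.sum_sub_distrib, Finset.sum_ite_eq' Finset.univ (⟨a, b⟩ : Vt n),
      if_pos (Finset.mem_univ _), ← Finset.mul_sum, sum_part_col n hn a i j]
    have hsz0 : (sz n a : ℝ) ≠ 0 := by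
      have := sz_pos n hn a
      positivity
    by_cases hj : (j : ℕ) = 0
    · rw [if_pos hj]
      have hP : Pm n ⟨a, b⟩ ⟨i, j⟩ = colval a i := by simp [Pm, hj]
      rw [hP, if_neg (by rintro ⟨-, h⟩; rw [hj] at h; exact hb h), one_div,
        inv_mul_cancel_left₀ hsz0, sub_self]
    · rw [if_neg hj]
      have hP : Pm n ⟨a, b⟩ ⟨i, j⟩ = if a = i ∧ (b : ℕ) = (j : ℕ) then 1 else 0 := by
        rw [Pm]
        dsimp only [Matrix.of_apply]
        rw [if_neg hj]
        have h0 : (if a = i ∧ (b : ℕ) = 0 then (1:ℝ) else 0) = 0 :=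
          if_neg (by rintro ⟨-, h⟩; exact hb h)
        rw [h0, sub_zero]
      rw [hP]
      ring

lemma prod_fin (N : ℕ) (hN : 0 < N) (r s : ℝ[X]) :
    ∏ j : Fin N, (if (j : ℕ) = 0 then r else s) = r * s ^ (N - 1) := by
  rw [← Finset.mul_prod_erase Finset.univ _ (Finset.mem_univ (⟨0, hN⟩ : Fin N)), if_pos rfl]
  congr 1
  rw [Finset.prod_congr rfl fun d hd => ?_, Finset.prod_const,
    Finset.card_erase_of_mem (Finset.mem_univ _), Finset.card_univ, Fintype.card_fin]
  rw [if_neg]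
  intro h
  exact Finset.ne_of_mem_erase hd (Fin.ext_iff.mpr h)

lemma prod_part (hn : 1 ≤ n) (i : Fin 4) :
    ∏ j : Fin (sz n i), (X - C (Dm n ⟨i, j⟩))
      = (X - C (if i = 0 then (0 : ℝ) else 5 * (n : ℝ)))
        * (X - C (if i = 0 then 7 * (n : ℝ) else 6 * (n : ℝ))) ^ (sz n i - 1) := by
  have e : ∀ j : Fin (sz n i), X - C (Dm n ⟨i, j⟩)
      = if (j : ℕ) = 0 then (X - C (if i = 0 then (0 : ℝ) else 5 * (n : ℝ)))
        else (X - C (if i = 0 then 7 * (n : ℝ) else 6 * (n : ℝ))) := by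
    intro j
    by_cases hj : (j : ℕ) = 0 <;> simp [Dm, hj]
  simp_rw [e]
  exact prod_fin _ (sz_pos n hn i) _ _

lemma charpoly_total (hn : 1 ≤ n) :
    (distLapMatrix (Gr n)).charpoly =
      X * (X - C (5 * (n : ℝ))) ^ 3 * (X - C (6 * (n : ℝ))) ^ (3 * (n - 1)) *
        (X - C (7 * (n : ℝ))) ^ (2 * n - 1) := by
  have key : distLapMatrix (Gr n) = Pm n * Matrix.diagonal (Dm n) * Qm n := by
    have hPQ : Pm n * Qm n = 1 := mul_eq_one_comm.mp (QP_eq n hn)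
    calc distLapMatrix (Gr n) = distLapMatrix (Gr n) * (Pm n * Qm n) := by
          rw [hPQ, Matrix.mul_one]
      _ = (distLapMatrix (Gr n) * Pm n) * Qm n := by rw [Matrix.mul_assoc]
      _ = Pm n * Matrix.diagonal (Dm n) * Qm n := by rw [LP_eq n hn]
  rw [key, charpoly_conj _ _ _ (QP_eq n hn), charpoly_diagonal, prodV, Fin.prod_univ_four,
    prod_part n hn 0, prod_part n hn 1, prod_part n hn 2, prod_part n hn 3]
  simp only [if_pos rfl, if_neg (show (1:Fin 4) ≠ 0 by decide),
    if_neg (show (2:Fin 4) ≠ 0 by decide), if_neg (show (3:Fin 4) ≠ 0 by decide),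
    if_true, eq_self_iff_true, map_zero, sub_zero]
  rw [show 3 * (n - 1) = (n - 1) + ((n - 1) + (n - 1)) by ring, pow_add, pow_add]
  ring

end U6nAux

/-- The distance Laplacian spectrum of `K_{2n,n,n,n}` (the non-commuting graph of `U_{6n}`)
consists of `0` with multiplicity `1`, `5n` with multiplicity `3`, `6n` with multiplicity
`3(n-1)`, and `7n` with multiplicity `2n-1`; in particular this graph is distance
Laplacian integral for all `n`. -/
theorem distLaplacian_spectrum_U6n (n : ℕ) (hn : 1 ≤ n) :
    (distLapMatrix (SimpleGraph.completeMultipartiteGraph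
        fun i : Fin 4 => Fin (if i = 0 then 2 * n else n))).charpoly =
      X * (X - C (5 * (n : ℝ))) ^ 3 * (X - C (6 * (n : ℝ))) ^ (3 * (n - 1)) *
        (X - C (7 * (n : ℝ))) ^ (2 * n - 1) ∧
    ∀ μ ∈ (distLapMatrix (SimpleGraph.completeMultipartiteGraph
        fun i : Fin 4 => Fin (if i = 0 then 2 * n else n))).charpoly.roots,
      ∃ z : ℤ, μ = (z : ℝ) := by
  have hmain : (distLapMatrix (SimpleGraph.completeMultipartiteGraph
      fun i : Fin 4 => Fin (if i = 0 then 2 * n else n))).charpoly =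
      X * (X - C (5 * (n : ℝ))) ^ 3 * (X - C (6 * (n : ℝ))) ^ (3 * (n - 1)) *
        (X - C (7 * (n : ℝ))) ^ (2 * n - 1) :=
    U6nAux.charpoly_total n hn
  refine ⟨hmain, ?_⟩
  intro μ hμ
  have hroot : IsRoot (X * (X - C (5 * (n : ℝ))) ^ 3 * (X - C (6 * (n : ℝ))) ^ (3 * (n - 1)) *
      (X - C (7 * (n : ℝ))) ^ (2 * n - 1)) μ := by
    rw [← hmain]
    exact isRoot_of_mem_roots hμ
  have heval : μ * (μ - 5 * n) ^ 3 * (μ - 6 * n) ^ (3 * (n - 1)) * (μ - 7 * n) ^ (2 * n - 1)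
      = 0 := by
    simpa [IsRoot, eval_mul, eval_pow, eval_sub] using hroot
  have factor : μ = 0 ∨ μ - 5 * n = 0 ∨ μ - 6 * n = 0 ∨ μ - 7 * n = 0 := by
    rcases mul_eq_zero.mp heval with h | h
    · rcases mul_eq_zero.mp h with h | h
      · rcases mul_eq_zero.mp h with h | h
        · exact Or.inl h
        · refine Or.inr (Or.inl ?_)
          by_contra hA
          exact pow_ne_zero _ hA h
      · refine Or.inr (Or.inr (Or.inl ?_))
        by_contra hA
        exact pow_ne_zero _ hA h
    · refine Or.inr (Or.inr (Or.inr ?_))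
      by_contra hA
      exact pow_ne_zero _ hA h
  rcases factor with h | h | h | h
  · exact ⟨0, by simpa using h⟩
  · exact ⟨5 * n, by push_cast; linarith⟩
  · exact ⟨6 * n, by push_cast; linarith⟩
  · exact ⟨7 * n, by push_cast; linarith⟩
end

section
/- For $m > 2$ odd and $n \geq 1$, the non-commuting graph of the metacyclic group $M_{2mn} = \langle a,b : a^m = b^{2n} = 1, bab^{-1} = a^{-1}\rangle$ is the complete $(m+1)$-partite graph $K_{(m-1)n, n, n, \ldots, n}$ with $m$ parts of size $n$. -/
/-- Relations of the metacyclic group `M_{2mn} = ⟨a, b : a^m = b^(2n) = 1, b a b⁻¹ = a⁻¹⟩`. -/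
def mRels (m n : ℕ) : Set (FreeGroup (Fin 2)) :=
  { (FreeGroup.of 0) ^ m, (FreeGroup.of 1) ^ (2 * n),
    FreeGroup.of 1 * FreeGroup.of 0 * (FreeGroup.of 1)⁻¹ * FreeGroup.of 0 }

set_option linter.unusedSectionVars false
set_option linter.unnecessarySimpa false
set_option linter.unreachableTactic false
set_option linter.unusedTactic false

namespace MetaHelper


abbrev MA (m : ℕ) := Multiplicative (ZMod m)
abbrev MB (n : ℕ) := Multiplicative (ZMod (2 * n))

/-- inversion automorphism on `MA m` -/
def ι (m : ℕ) : MulAut (MA m) := MulEquiv.inv (MA m)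

lemma ι_sq (m : ℕ) : ι m ^ 2 = 1 := by
  ext x
  simp [ι, pow_succ]

lemma ι_pow_even (m k : ℕ) (hk : Even k) : ι m ^ k = 1 := by
  obtain ⟨c, rfl⟩ := hk
  rw [← two_mul, pow_mul, ι_sq, one_pow]

lemma ι_pow_odd (m k : ℕ) (hk : ¬ Even k) : ι m ^ k = ι m := by
  obtain ⟨c, rfl⟩ := Nat.not_even_iff_odd.mp hk
  rw [pow_succ, ι_pow_even m _ (even_two_mul c), one_mul]

def φ (m n : ℕ) : MB n →* MulAut (MA m) :=
  AddMonoidHom.toMultiplicativeLeft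
    (ZMod.lift (2 * n) ⟨zmultiplesHom _ (Additive.ofMul (ι m)), by
      simp only [zmultiplesHom_apply]
      have h : (ι m) ^ (2 * n) = 1 := by rw [pow_mul, ι_sq, one_pow]
      rw [natCast_zsmul, ← ofMul_pow, h, ofMul_one]⟩)

lemma φ_apply (m n : ℕ) [NeZero n] (j : ZMod (2 * n)) :
    φ m n (Multiplicative.ofAdd j) = ι m ^ j.val := by
  haveI : NeZero (2 * n) := ⟨by have := NeZero.ne n; omega⟩
  have hj : j = ((j.val : ℤ) : ZMod (2 * n)) := by
    push_cast
    rw [ZMod.natCast_val, ZMod.cast_id]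
  rw [φ, AddMonoidHom.toMultiplicativeLeft]
  simp only [MonoidHom.coe_mk, OneHom.coe_mk, Equiv.coe_fn_mk]
  change Additive.toMul ((ZMod.lift (2 * n) ⟨zmultiplesHom _ (Additive.ofMul (ι m)), _⟩) j) = _
  conv_lhs => rw [hj]
  rw [ZMod.lift_coe]
  simp only [zmultiplesHom_apply, natCast_zsmul, ← ofMul_pow]
  rfl

lemma φ_apply_even (m n : ℕ) [NeZero n] (j : ZMod (2 * n)) (hj : Even j.val) (x : MA m) :
    φ m n (Multiplicative.ofAdd j) x = x := by
  rw [φ_apply, ι_pow_even m _ hj]; rfl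

lemma φ_apply_odd (m n : ℕ) [NeZero n] (j : ZMod (2 * n)) (hj : ¬ Even j.val) (x : MA m) :
    φ m n (Multiplicative.ofAdd j) x = x⁻¹ := by
  rw [φ_apply, ι_pow_odd m _ hj]; rfl



abbrev G (m n : ℕ) := SemidirectProduct (MA m) (MB n) (φ m n)

variable (m n : ℕ)

lemma two_inj (hodd : Odd m) (x y : ZMod m) (h : x + x = y + y) : x = y := by
  have hu : IsUnit (2 : ZMod m) := by
    refine (ZMod.isUnit_iff_coprime 2 m).mpr ?_
    exact Nat.coprime_two_left.mpr hodd
  have h2 : (2 : ZMod m) * x = 2 * y := by ring_nf; linear_combination h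
  exact hu.mul_left_cancel h2

lemma sq_inj (hodd : Odd m) (x y : MA m) (h : x * x = y * y) : x = y := by
  have := congrArg Multiplicative.toAdd h
  exact two_inj m hodd _ _ this

lemma commute_iff (g h : G m n) :
    g * h = h * g ↔ g.left * φ m n g.right h.left = h.left * φ m n h.right g.left := by
  constructor
  · intro e
    have := congrArg SemidirectProduct.left e
    simpa using this
  · intro e
    ext
    · exact congrArg Multiplicative.toAdd e
    · simp [mul_comm]

section Pt

open SemidirectProduct Multiplicative

lemma mem_center_iff [NeZero n] (hm : 2 < m) (hodd : Odd m) (g : G m n) :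
    g ∈ Subgroup.center (G m n) ↔
      g.left = 1 ∧ Even (Multiplicative.toAdd g.right).val := by
  haveI : NeZero m := ⟨by omega⟩
  haveI : Fact (1 < m) := ⟨by omega⟩
  haveI : Fact (1 < 2 * n) := ⟨by have := NeZero.ne n; omega⟩
  rw [Subgroup.mem_center_iff]
  constructor
  · intro hc
    have heven : Even (Multiplicative.toAdd g.right).val := by
      by_contra he
      have h2 := hc (inl (ofAdd (1 : ZMod m)))
      have h2l := congrArg SemidirectProduct.left h2
      simp only [mul_left, left_inl, right_inl, map_one, MulAut.one_apply] at h2l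
      rw [show g.right = ofAdd (toAdd g.right) from rfl, φ_apply_odd m n _ he] at h2l
      have e1 : ofAdd (1 : ZMod m) = (ofAdd (1 : ZMod m))⁻¹ := by
        have := mul_left_cancel (a := g.left)
          (by rw [← h2l, mul_comm] :
            g.left * ofAdd (1 : ZMod m) = g.left * (ofAdd (1 : ZMod m))⁻¹)
        exact this
      have e2 : (1 : ZMod m) = 0 := by
        have := sq_inj m hodd (ofAdd (1 : ZMod m)) 1 (by nth_rewrite 2 [e1]; simp)
        simpa using congrArg Multiplicative.toAdd this
      have : (1 : ZMod m) ≠ 0 := one_ne_zero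
      exact this e2
    refine ⟨?_, heven⟩
    have hodd1 : ¬ Even ((toAdd (ofAdd (1 : ZMod (2 * n)))).val) := by
      simpa [ZMod.val_one] using (by decide : ¬ Even 1)
    have h1 := hc (inr (ofAdd (1 : ZMod (2 * n))))
    have h1l := congrArg SemidirectProduct.left h1
    simp only [mul_left, left_inr, right_inr, map_one, one_mul, mul_one] at h1l
    rw [φ_apply_odd m n _ (by simpa using hodd1)] at h1l
    have := sq_inj m hodd g.left 1 (by nth_rewrite 1 [← h1l]; simp)
    exact this
  · rintro ⟨hl, he⟩ h
    ext
    · simp only [mul_left, hl, map_one, mul_one]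
      rw [show g.right = ofAdd (toAdd g.right) from rfl, φ_apply_even m n _ he, one_mul]
    · simp [mul_comm]


def part [NeZero m] (g : G m n) : Fin (m + 1) :=
  if Even (Multiplicative.toAdd g.right).val then 0
  else ⟨(Multiplicative.toAdd g.left).val + 1, by
    have := ZMod.val_lt (Multiplicative.toAdd g.left); omega⟩

lemma sq_eq_iff (hodd : Odd m) (x y : MA m) :
    x * y⁻¹ = y * x⁻¹ ↔ x = y := by
  constructor
  · intro e
    apply sq_inj m hodd
    calc x * x = x * y⁻¹ * (y * x) := by rw [mul_assoc, inv_mul_cancel_left]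
      _ = y * x⁻¹ * (y * x) := by rw [e]
      _ = y * (x⁻¹ * (x * y)) := by rw [mul_assoc, mul_comm y x]
      _ = y * y := by rw [inv_mul_cancel_left]
  · rintro rfl; rfl

lemma commute_iff_part [NeZero m] [NeZero n] (hm : 2 < m) (hodd : Odd m) (g h : G m n)
    (hg : g ∉ Subgroup.center (G m n)) (hh : h ∉ Subgroup.center (G m n)) :
    g * h = h * g ↔ part m n g = part m n h := by
  rw [commute_iff]
  rw [mem_center_iff m n hm hodd] at hg hh
  by_cases eg : Even (Multiplicative.toAdd g.right).val <;>
    by_cases eh : Even (Multiplicative.toAdd h.right).val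
  · rw [show g.right = ofAdd (toAdd g.right) from rfl,
       show h.right = ofAdd (toAdd h.right) from rfl,
       φ_apply_even m n _ eg, φ_apply_even m n _ eh]
    simp [part, eg, eh, mul_comm]
  · refine iff_of_false ?_ ?_
    · rw [show g.right = ofAdd (toAdd g.right) from rfl,
         show h.right = ofAdd (toAdd h.right) from rfl,
         φ_apply_even m n _ eg, φ_apply_odd m n _ eh]
      intro e
      rw [mul_comm] at e
      have e2 := mul_left_cancel e
      have : g.left = 1 := sq_inj m hodd _ _ (by nth_rewrite 2 [e2]; simp)
      exact hg ⟨this, eg⟩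
    · simp only [part, if_pos eg, if_neg eh]
      intro e
      have := congrArg Fin.val e
      simp at this
  · refine iff_of_false ?_ ?_
    · rw [show g.right = ofAdd (toAdd g.right) from rfl,
         show h.right = ofAdd (toAdd h.right) from rfl,
         φ_apply_odd m n _ eg, φ_apply_even m n _ eh]
      intro e
      rw [mul_comm h.left] at e
      have e2 := mul_left_cancel e.symm
      have : h.left = 1 := sq_inj m hodd _ _ (by nth_rewrite 2 [e2]; simp)
      exact hh ⟨this, eh⟩
    · simp only [part, if_neg eg, if_pos eh]
      intro e
      have := congrArg Fin.val e
      simp at this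
  · rw [show g.right = ofAdd (toAdd g.right) from rfl,
       show h.right = ofAdd (toAdd h.right) from rfl,
       φ_apply_odd m n _ eg, φ_apply_odd m n _ eh]
    rw [sq_eq_iff m hodd]
    simp only [part, if_neg eg, if_neg eh]
    constructor
    · intro e; exact Fin.ext (by simp only [Fin.val_mk]; rw [e])
    · intro e
      have := congrArg Fin.val e
      simp only [Fin.val_mk] at this
      have hv : (toAdd g.left).val = (toAdd h.left).val := by omega
      have := ZMod.val_injective _ hv
      exact (by simpa using this : g.left = h.left)

end Pt




abbrev P (m n : ℕ) := PresentedGroup (mRels m n)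

def A : P m n := PresentedGroup.of 0
def B : P m n := PresentedGroup.of 1

lemma relA : (A m n) ^ m = 1 := by
  have : ((FreeGroup.of 0 : FreeGroup (Fin 2)) ^ m) ∈ mRels m n := by
    left; rfl
  have h := (QuotientGroup.eq_one_iff ((FreeGroup.of 0 : FreeGroup (Fin 2)) ^ m)).mpr
    (Subgroup.subset_normalClosure this)
  simpa [A, PresentedGroup.of, map_pow] using PresentedGroup.one_of_mem this

lemma relB : (B m n) ^ (2 * n) = 1 := by
  have : ((FreeGroup.of 1 : FreeGroup (Fin 2)) ^ (2 * n)) ∈ mRels m n := by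
    right; left; rfl
  have h := (QuotientGroup.eq_one_iff ((FreeGroup.of 1 : FreeGroup (Fin 2)) ^ (2 * n))).mpr
    (Subgroup.subset_normalClosure this)
  simpa [B, PresentedGroup.of, map_pow] using PresentedGroup.one_of_mem this

lemma relC : B m n * A m n * (B m n)⁻¹ = (A m n)⁻¹ := by
  have : (FreeGroup.of 1 * FreeGroup.of 0 * (FreeGroup.of 1)⁻¹ * FreeGroup.of 0 :
      FreeGroup (Fin 2)) ∈ mRels m n := by
    right; right; rfl
  have h := (QuotientGroup.eq_one_iff _).mpr (Subgroup.subset_normalClosure this)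
  have h2 : B m n * A m n * (B m n)⁻¹ * A m n = 1 := by
    simpa [A, B, PresentedGroup.of, map_mul, map_inv] using PresentedGroup.one_of_mem this
  exact mul_eq_one_iff_eq_inv.mp h2


lemma pow_mod {Q : Type*} [Group Q] (x : Q) (N k : ℕ) (h : x ^ N = 1) :
    x ^ k = x ^ (k % N) := by
  conv_lhs => rw [← Nat.div_add_mod k N]
  rw [pow_add, pow_mul, h, one_pow, one_mul]

def Apow (i : ZMod m) : P m n := A m n ^ i.val
def Bpow (j : ZMod (2 * n)) : P m n := B m n ^ j.val

variable [NeZero m] [NeZero n]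

instance : NeZero (2 * n) := ⟨by have := NeZero.ne n; omega⟩

lemma Apow_add (i i' : ZMod m) : Apow m n (i + i') = Apow m n i * Apow m n i' := by
  rw [Apow, Apow, Apow, ZMod.val_add, ← pow_mod _ _ _ (relA m n), pow_add]

lemma Apow_zero : Apow m n 0 = 1 := by
  simp [Apow, ZMod.val_zero]

lemma Apow_neg (i : ZMod m) : Apow m n (-i) = (Apow m n i)⁻¹ := by
  have h : Apow m n i * Apow m n (-i) = 1 := by
    rw [← Apow_add, add_neg_cancel, Apow_zero]
  exact eq_inv_of_mul_eq_one_right h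

lemma Bpow_add (j j' : ZMod (2 * n)) : Bpow m n (j + j') = Bpow m n j * Bpow m n j' := by
  rw [Bpow, Bpow, Bpow, ZMod.val_add, ← pow_mod _ _ _ (relB m n), pow_add]

lemma Bpow_zero : Bpow m n 0 = 1 := by
  simp [Bpow, ZMod.val_zero]

lemma Bpow_neg (j : ZMod (2 * n)) : Bpow m n (-j) = (Bpow m n j)⁻¹ := by
  have h : Bpow m n j * Bpow m n (-j) = 1 := by
    rw [← Bpow_add, add_neg_cancel, Bpow_zero]
  exact eq_inv_of_mul_eq_one_right h

lemma conj_Apow (k : ℕ) (i : ZMod m) :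
    B m n ^ k * Apow m n i * (B m n ^ k)⁻¹ = Apow m n ((-1) ^ k * i) := by
  induction k generalizing i with
  | zero => simp
  | succ k ih =>
    have step : ∀ i' : ZMod m, B m n * Apow m n i' * (B m n)⁻¹ = Apow m n (-i') := by
      intro i'
      rw [Apow, ← conj_pow, relC m n, inv_pow, ← Apow, ← Apow_neg]
    rw [pow_succ']
    rw [mul_inv_rev]
    have e : B m n * B m n ^ k * Apow m n i * ((B m n ^ k)⁻¹ * (B m n)⁻¹)
        = B m n * (B m n ^ k * Apow m n i * (B m n ^ k)⁻¹) * (B m n)⁻¹ := by group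
    rw [e, ih, step]
    congr 1; ring


lemma conj_Apow' (j : ZMod (2 * n)) (i : ZMod m) :
    Bpow m n j * Apow m n i * (Bpow m n j)⁻¹ = Apow m n ((-1) ^ j.val * i) :=
  conj_Apow m n j.val i

theorem normal_form (hm : 2 < m) (x : P m n) : ∃ (i : ZMod m) (j : ZMod (2 * n)),
    x = Apow m n i * Bpow m n j := by
  haveI : Fact (1 < m) := ⟨by omega⟩
  haveI : Fact (1 < 2 * n) := ⟨by have := NeZero.ne n; omega⟩
  have hx : x ∈ Subgroup.closure (Set.range (PresentedGroup.of (rels := mRels m n))) := by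
    rw [PresentedGroup.closure_range_of]; trivial
  induction hx using Subgroup.closure_induction with
  | mem x hxk =>
    obtain ⟨t, rfl⟩ := hxk
    fin_cases t
    · exact ⟨1, 0, by rw [Apow, Bpow, ZMod.val_one, ZMod.val_zero, pow_one, pow_zero, mul_one]; rfl⟩
    · exact ⟨0, 1, by rw [Apow, Bpow, ZMod.val_one, ZMod.val_zero, pow_one, pow_zero, one_mul]; rfl⟩
  | one => exact ⟨0, 0, by rw [Apow_zero, Bpow_zero, mul_one]⟩
  | mul x y hxc hyc hx hy =>
    obtain ⟨i, j, rfl⟩ := hx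
    obtain ⟨i', j', rfl⟩ := hy
    refine ⟨i + (-1) ^ j.val * i', j + j', ?_⟩
    rw [Apow_add, Bpow_add, ← conj_Apow' m n j i']
    group
  | inv x hxc hx =>
    obtain ⟨i, j, rfl⟩ := hx
    refine ⟨(-1) ^ (-j).val * (-i), -j, ?_⟩
    rw [← conj_Apow' m n (-j) (-i), Apow_neg, Bpow_neg]
    group


section Pi

open SemidirectProduct Multiplicative

def fgen (m n : ℕ) : Fin 2 → G m n := fun t =>
  if t = 0 then SemidirectProduct.inl (Multiplicative.ofAdd (1 : ZMod m))
  else SemidirectProduct.inr (Multiplicative.ofAdd (1 : ZMod (2 * n)))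

lemma fgen_rels (m n : ℕ) [NeZero n] : ∀ r ∈ mRels m n, FreeGroup.lift (fgen m n) r = 1 := by
  haveI : Fact (1 < 2 * n) := ⟨by have := NeZero.ne n; omega⟩
  intro r hr
  simp only [mRels, Set.mem_insert_iff, Set.mem_singleton_iff] at hr
  rcases hr with rfl | rfl | rfl
  · rw [map_pow, FreeGroup.lift_apply_of]
    show (fgen m n 0) ^ m = 1
    rw [fgen, if_pos rfl, ← map_pow]
    have : (ofAdd (1 : ZMod m)) ^ m = 1 := by
      rw [← ofAdd_nsmul, nsmul_eq_mul, mul_one, ZMod.natCast_self]; rfl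
    rw [this, map_one]
  · rw [map_pow, FreeGroup.lift_apply_of]
    show (fgen m n 1) ^ (2 * n) = 1
    rw [fgen, if_neg (by decide), ← map_pow]
    have : (ofAdd (1 : ZMod (2 * n))) ^ (2 * n) = 1 := by
      rw [← ofAdd_nsmul, nsmul_eq_mul, mul_one, ZMod.natCast_self]; rfl
    rw [this, map_one]
  · simp only [map_mul, map_inv, FreeGroup.lift_apply_of]
    have h0 : fgen m n 0 = inl (ofAdd (1 : ZMod m)) := by simp [fgen]
    have h1 : fgen m n 1 = inr (ofAdd (1 : ZMod (2 * n))) := by simp [fgen]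
    rw [h0, h1, ← map_inv, ← SemidirectProduct.inl_aut, ← map_mul,
      φ_apply_odd m n _ (by rw [ZMod.val_one]; decide)]
    simp

def pi (m n : ℕ) [NeZero n] : P m n →* G m n := PresentedGroup.toGroup (fgen_rels m n)

lemma pi_A (m n : ℕ) [NeZero n] : pi m n (A m n) = inl (ofAdd (1 : ZMod m)) := by
  rw [A, pi, PresentedGroup.toGroup.of, fgen, if_pos rfl]

lemma pi_B (m n : ℕ) [NeZero n] : pi m n (B m n) = inr (ofAdd (1 : ZMod (2 * n))) := by
  rw [B, pi, PresentedGroup.toGroup.of, fgen, if_neg (by decide)]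

lemma pi_Apow (m n : ℕ) [NeZero m] [NeZero n] (i : ZMod m) :
    pi m n (Apow m n i) = inl (ofAdd i) := by
  rw [Apow, map_pow, pi_A, ← map_pow, ← ofAdd_nsmul, nsmul_eq_mul, mul_one,
    ZMod.natCast_val, ZMod.cast_id]

lemma pi_Bpow (m n : ℕ) [NeZero n] (j : ZMod (2 * n)) :
    pi m n (Bpow m n j) = inr (ofAdd j) := by
  rw [Bpow, map_pow, pi_B, ← map_pow, ← ofAdd_nsmul, nsmul_eq_mul, mul_one,
    ZMod.natCast_val, ZMod.cast_id]

lemma pi_nf (m n : ℕ) [NeZero m] [NeZero n] (i : ZMod m) (j : ZMod (2 * n)) :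
    pi m n (Apow m n i * Bpow m n j) = ⟨ofAdd i, ofAdd j⟩ := by
  rw [map_mul, pi_Apow, pi_Bpow, ← SemidirectProduct.mk_eq_inl_mul_inr]

lemma pi_bij (m n : ℕ) [NeZero m] [NeZero n] (hm : 2 < m) :
    Function.Bijective (pi m n) := by
  constructor
  · intro x y hxy
    obtain ⟨i, j, rfl⟩ := normal_form m n hm x
    obtain ⟨i', j', rfl⟩ := normal_form m n hm y
    rw [pi_nf, pi_nf] at hxy
    have h1 : i = i' := by simpa using congrArg (fun g => toAdd (SemidirectProduct.left g)) hxy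
    have h2 : j = j' := by simpa using congrArg (fun g => toAdd (SemidirectProduct.right g)) hxy
    rw [h1, h2]
  · intro g
    exact ⟨Apow m n (toAdd g.left) * Bpow m n (toAdd g.right), by
      rw [pi_nf]; ext <;> simp⟩

noncomputable def piEquiv (m n : ℕ) [NeZero m] [NeZero n] (hm : 2 < m) : P m n ≃* G m n :=
  MulEquiv.ofBijective (pi m n) (pi_bij m n hm)

end Pi

section Graph

open SemidirectProduct Multiplicative

def graphIsoOfMulEquiv {H K : Type*} [Group H] [Group K] (e : H ≃* K) :
    noncommGraph H ≃g noncommGraph K where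
  toEquiv := e.toEquiv.subtypeEquiv fun h => not_congr (by
    rw [Subgroup.mem_center_iff, Subgroup.mem_center_iff]
    constructor
    · intro hc k
      obtain ⟨k', rfl⟩ := e.surjective k
      show e k' * e h = e h * e k'
      rw [← map_mul, ← map_mul, hc]
    · intro hc k'
      apply e.injective
      rw [map_mul, map_mul]
      exact hc (e k'))
  map_rel_iff' := by
    intro u v
    show e u.1 * e v.1 ≠ e v.1 * e u.1 ↔ u.1 * v.1 ≠ v.1 * u.1
    rw [← map_mul, ← map_mul]
    exact not_congr e.injective.eq_iff

lemma part_eq_zero_iff (m n : ℕ) [NeZero m] (g : G m n) :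
    part m n g = 0 ↔ Even (toAdd g.right).val := by
  constructor
  · intro h
    by_contra he
    rw [part, if_neg he] at h
    exact absurd (congrArg Fin.val h) (by simp)
  · intro h
    rw [part, if_pos h]

def evenEquiv (n : ℕ) [NeZero n] : {j : ZMod (2 * n) // Even j.val} ≃ Fin n where
  toFun j := ⟨j.1.val / 2, by
    have h1 := ZMod.val_lt j.1
    have h2 := NeZero.ne n
    omega⟩
  invFun k := ⟨((2 * k.1 : ℕ) : ZMod (2 * n)), by
    rw [ZMod.val_cast_of_lt (by have := k.2; omega)]
    exact ⟨k.1, by omega⟩⟩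
  left_inv j := by
    apply Subtype.ext
    obtain ⟨c, hc⟩ := j.2
    show (((2 * (j.1.val / 2) : ℕ) : ZMod (2 * n))) = j.1
    rw [show 2 * (j.1.val / 2) = j.1.val from by omega]
    rw [ZMod.natCast_val, ZMod.cast_id]
  right_inv k := by
    apply Fin.ext
    show ((2 * k.1 : ℕ) : ZMod (2 * n)).val / 2 = k.1
    rw [ZMod.val_cast_of_lt (by have := k.2; omega)]
    omega

def oddEquiv (n : ℕ) [NeZero n] : {j : ZMod (2 * n) // ¬ Even j.val} ≃ Fin n where
  toFun j := ⟨j.1.val / 2, by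
    have h1 := ZMod.val_lt j.1
    have h2 := NeZero.ne n
    omega⟩
  invFun k := ⟨((2 * k.1 + 1 : ℕ) : ZMod (2 * n)), by
    rw [ZMod.val_cast_of_lt (by have := k.2; omega)]
    rw [Nat.not_even_iff]
    omega⟩
  left_inv j := by
    apply Subtype.ext
    have hodd := Nat.not_even_iff.mp j.2
    show (((2 * (j.1.val / 2) + 1 : ℕ) : ZMod (2 * n))) = j.1
    rw [show 2 * (j.1.val / 2) + 1 = j.1.val from by omega]
    rw [ZMod.natCast_val, ZMod.cast_id]
  right_inv k := by
    apply Fin.ext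
    show ((2 * k.1 + 1 : ℕ) : ZMod (2 * n)).val / 2 = k.1
    rw [ZMod.val_cast_of_lt (by have := k.2; omega)]
    omega

lemma card_ne_zero (m : ℕ) [NeZero m] :
    Fintype.card {x : ZMod m // x ≠ 0} = m - 1 := by
  have h := Fintype.card_subtype_compl (p := fun x : ZMod m => x = 0)
  rw [Fintype.card_subtype_eq, ZMod.card] at h
  exact h

end Graph

end MetaHelper

open MetaHelper SemidirectProduct Multiplicative in
/-- For `m > 2` odd and `n ≥ 1`, the non-commuting graph of the metacyclic group `M_{2mn}`
is the complete `(m+1)`-partite graph `K_{(m-1)n,n,…,n}` with `m` parts of size `n`. -/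
theorem noncommGraph_metacyclic_odd (m n : ℕ) (hm : 2 < m) (hodd : Odd m) (hn : 1 ≤ n) :
    Nonempty (noncommGraph (PresentedGroup (mRels m n)) ≃g
      SimpleGraph.completeMultipartiteGraph
        fun i : Fin (m + 1) => Fin (if i = 0 then (m - 1) * n else n)) := by
  haveI : NeZero m := ⟨by omega⟩
  haveI : NeZero n := ⟨by omega⟩
  classical
  let e1 := graphIsoOfMulEquiv (piEquiv m n hm)
  let V := {g : G m n // g ∉ Subgroup.center (G m n)}
  let p : V → Fin (m + 1) := fun v => part m n v.1
  have key : ∀ i : Fin (m + 1),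
      Nonempty ({v : V // p v = i} ≃ Fin (if i = 0 then (m - 1) * n else n)) := by
    intro i
    by_cases hi : i = 0
    · subst hi
      rw [if_pos rfl]
      have E1 : {v : V // p v = 0} ≃
          ({x : ZMod m // x ≠ 0} × {j : ZMod (2 * n) // Even j.val}) :=
        { toFun := fun v =>
            (⟨toAdd v.1.1.left, by
              have heven := (part_eq_zero_iff m n v.1.1).mp v.2
              have hnc := v.1.2
              rw [mem_center_iff m n hm hodd] at hnc
              intro h0
              exact hnc ⟨by
                have := congrArg ofAdd h0
                simpa using this, heven⟩⟩,
             ⟨toAdd v.1.1.right, (part_eq_zero_iff m n v.1.1).mp v.2⟩)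
          invFun := fun x =>
            ⟨⟨⟨ofAdd x.1.1, ofAdd x.2.1⟩, by
              rw [mem_center_iff m n hm hodd]
              rintro ⟨hl, -⟩
              exact x.1.2 (by simpa using congrArg toAdd hl)⟩, by
              show part m n _ = 0
              exact (part_eq_zero_iff m n _).mpr (by simpa using x.2.2)⟩
          left_inv := fun v => rfl
          right_inv := fun x => rfl }
      have E2 : {x : ZMod m // x ≠ 0} ≃ Fin (m - 1) :=
        Fintype.equivFinOfCardEq (card_ne_zero m)
      exact ⟨E1.trans ((E2.prodCongr (evenEquiv n)).trans finProdFinEquiv)⟩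
    · rw [if_neg hi]
      have hi1 : 1 ≤ i.1 := Nat.one_le_iff_ne_zero.mpr (fun h => hi (Fin.ext h))
      have him : i.1 - 1 < m := by have := i.2; omega
      have oddOf : ∀ v : {v : V // p v = i}, ¬ Even (toAdd v.1.1.right).val := by
        intro v hev
        have h0 := (part_eq_zero_iff m n v.1.1).mpr hev
        exact hi (by rw [← v.2]; exact h0)
      have E1 : {v : V // p v = i} ≃ {j : ZMod (2 * n) // ¬ Even j.val} :=
        { toFun := fun v => ⟨toAdd v.1.1.right, oddOf v⟩
          invFun := fun j =>
            ⟨⟨⟨ofAdd ((i.1 - 1 : ℕ) : ZMod m), ofAdd j.1⟩, by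
              rw [mem_center_iff m n hm hodd]
              rintro ⟨-, hev⟩
              exact j.2 (by simpa using hev)⟩, by
              show part m n _ = i
              rw [part, if_neg (by simpa using j.2)]
              apply Fin.ext
              show (toAdd (ofAdd ((i.1 - 1 : ℕ) : ZMod m))).val + 1 = i.1
              rw [toAdd_ofAdd, ZMod.val_cast_of_lt him]
              omega⟩
          left_inv := fun v => by
            apply Subtype.ext
            apply Subtype.ext
            have hp : part m n v.1.1 = i := v.2
            rw [part, if_neg (oddOf v)] at hp
            have hval : (toAdd v.1.1.left).val = i.1 - 1 := by
              have := congrArg Fin.val hp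
              simp only [Fin.val_mk] at this
              omega
            have hleft : (((i.1 - 1 : ℕ) : ZMod m)) = toAdd v.1.1.left := by
              rw [← hval, ZMod.natCast_val, ZMod.cast_id]
            show (⟨ofAdd ((i.1 - 1 : ℕ) : ZMod m), ofAdd (toAdd v.1.1.right)⟩ : G m n) = v.1.1
            ext
            · exact hleft
            · rfl
          right_inv := fun j => rfl }
      exact ⟨E1.trans (oddEquiv n)⟩
  let F : ∀ i : Fin (m + 1), {v : V // p v = i} ≃ Fin (if i = 0 then (m - 1) * n else n) :=
    fun i => (key i).some
  refine ⟨e1.trans ⟨(Equiv.sigmaFiberEquiv p).symm.trans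
    (Equiv.sigmaCongrRight F), ?_⟩⟩
  intro u v
  show (p u ≠ p v) ↔ (u.1 * v.1 ≠ v.1 * u.1)
  exact not_congr (commute_iff_part m n hm hodd u.1 v.1 u.2 v.2).symm
end
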